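/- arXiv:2506.14279 — 3 statements merged into one kernel-verified Lean document; each statement's English description precedes it below -/
import Mathlib

section
/- Let n ∈ ℕ be such that both n and n − 2 are prime (so n is the larger of a pair of twin primes). For H = B±(C_n), where C_n is a cyclic group of order n, one has Δ*(H) = {1, n − 2}. -/
open Multiset

variable {G : Type*} [AddCommGroup G]

/-- `S` is a plus-minus weighted zero-sum sequence: `S` splits as `S₁ + S₂` with
`S₁.sum = S₂.sum`, i.e. some choice of signs `ε_i ∈ {+1, -1}` makes the weighted sum vanish. -/
def IsPMZeroSum (S : Multiset G) : Prop :=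
  ∃ S₁ S₂ : Multiset G, S = S₁ + S₂ ∧ S₁.sum = S₂.sum

/-- The monoid `B±(G₀)` of plus-minus weighted zero-sum sequences over `G₀ ⊆ G`, as an
additive submonoid of the free commutative monoid `Multiset G` of sequences over `G`. -/
def PMZS (G₀ : Set G) : AddSubmonoid (Multiset G) where
  carrier := {S | (∀ g ∈ S, g ∈ G₀) ∧ IsPMZeroSum S}
  zero_mem' := ⟨fun g hg => absurd hg (Multiset.notMem_zero g), 0, 0, by simp, rfl⟩
  add_mem' := by
    rintro S T ⟨hS, S₁, S₂, rfl, h12⟩ ⟨hT, T₁, T₂, rfl, h34⟩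
    exact ⟨fun g hg => (Multiset.mem_add.mp hg).elim (fun h => hS g h) (fun h => hT g h),
      S₁ + T₁, S₂ + T₂, add_add_add_comm S₁ S₂ T₁ T₂, by simp [h12, h34]⟩

/-- `A` is an atom (irreducible element) of the submonoid `H` of `Multiset G`. -/
def IsPMAtom (H : AddSubmonoid (Multiset G)) (A : Multiset G) : Prop :=
  A ∈ H ∧ A ≠ 0 ∧ ∀ B C : Multiset G, B ∈ H → C ∈ H → A = B + C → B = 0 ∨ C = 0

/-- The set of lengths `L(a)` of `a` in `H`: all `k` such that `a` is a sum of `k` atoms of `H`. -/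
def LengthSet (H : AddSubmonoid (Multiset G)) (a : Multiset G) : Set ℕ :=
  {k | ∃ l : List (Multiset G), (∀ A ∈ l, IsPMAtom H A) ∧ l.sum = a ∧ l.length = k}

/-- The set of successive distances `Δ(L)` of a set `L ⊆ ℕ`. -/
def DistSet (L : Set ℕ) : Set ℕ :=
  {d | 0 < d ∧ ∃ a ∈ L, a + d ∈ L ∧ ∀ b ∈ L, a < b → a + d ≤ b}

/-- The set of distances `Δ(H) = ⋃_{a ∈ H} Δ(L(a))`. -/
def DeltaM (H : AddSubmonoid (Multiset G)) : Set ℕ :=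
  {d | ∃ a ∈ H, d ∈ DistSet (LengthSet H a)}

/-- `a` divides `b` in `H`. -/
def DvdIn (H : AddSubmonoid (Multiset G)) (a b : Multiset G) : Prop :=
  ∃ c ∈ H, b = a + c

/-- `S` is a divisor-closed submonoid of `H`. -/
def IsDivClosed (H S : AddSubmonoid (Multiset G)) : Prop :=
  S ≤ H ∧ ∀ s ∈ S, ∀ a ∈ H, DvdIn H a s → a ∈ S

/-- The set of minimal distances
`Δ*(H) = {min Δ(S) : S a divisor-closed submonoid of H with Δ(S) ≠ ∅}`. -/
def DeltaStar (H : AddSubmonoid (Multiset G)) : Set ℕ :=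
  {d | ∃ S : AddSubmonoid (Multiset G), IsDivClosed H S ∧ (DeltaM S).Nonempty ∧ d = sInf (DeltaM S)}

/-- The set of lengths of atoms of `H`. -/
def AtomLengths (H : AddSubmonoid (Multiset G)) : Set ℕ :=
  {n | ∃ A : Multiset G, IsPMAtom H A ∧ Multiset.card A = n}

/-- The Davenport constant `D(H)` of `H`: the supremum of the lengths of the atoms of `H`.  -/
noncomputable def DavD (H : AddSubmonoid (Multiset G)) : ℕ :=
  sSup (AtomLengths H)

/-- The system of sets of lengths `L(H)` of `H`. -/
def LSys (H : AddSubmonoid (Multiset G)) : Set (Set ℕ) :=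
  {L | ∃ a ∈ H, L = LengthSet H a}

/-- `d` is the greatest common divisor of the set `S` of integers. -/
def IsSetGCD (S : Set ℤ) (d : ℕ) : Prop :=
  (∀ x ∈ S, (d : ℤ) ∣ x) ∧ ∀ c : ℕ, (∀ x ∈ S, (c : ℤ) ∣ x) → c ∣ d

/-- A family `e` of elements of an abelian group is independent if `∑ c i • e i = 0`
with integer coefficients implies `c i • e i = 0` for each `i`. -/
def IsIndepFamily {k : ℕ} (e : Fin k → G) : Prop :=
  ∀ c : Fin k → ℤ, ∑ i, c i • e i = 0 → ∀ i, c i • e i = 0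

/-- The (classical) Davenport constant of the abelian group `G`: the smallest `ℓ` such that
every sequence over `G` of length at least `ℓ` has a nonempty zero-sum subsequence. -/
noncomputable def DavenportGroup (G : Type*) [AddCommGroup G] : ℕ :=
  sInf {ℓ | ∀ S : Multiset G, ℓ ≤ Multiset.card S → ∃ T, T ≤ S ∧ T ≠ 0 ∧ T.sum = 0}


section Lemmas

-- basic pm lemmas
lemma pm_zero : IsPMZeroSum (0 : Multiset G) := ⟨0, 0, by simp, rfl⟩

lemma pm_add {S T : Multiset G} (hS : IsPMZeroSum S) (hT : IsPMZeroSum T) :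
    IsPMZeroSum (S + T) := by
  obtain ⟨S₁, S₂, rfl, h1⟩ := hS
  obtain ⟨T₁, T₂, rfl, h2⟩ := hT
  exact ⟨S₁ + T₁, S₂ + T₂, add_add_add_comm S₁ S₂ T₁ T₂, by simp [h1, h2]⟩

lemma pm_double (S : Multiset G) : IsPMZeroSum (S + S) := ⟨S, S, rfl, rfl⟩

lemma pm_singleton {x : G} (h : IsPMZeroSum ({x} : Multiset G)) : x = 0 := by
  obtain ⟨S₁, S₂, hsp, hsum⟩ := h
  have hc : Multiset.card S₁ + Multiset.card S₂ = 1 := by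
    have := congrArg Multiset.card hsp; simpa using this.symm
  rcases Nat.add_eq_one_iff.mp hc with ⟨h1, h2⟩ | ⟨h1, h2⟩
  · have hS1 : S₁ = 0 := Multiset.card_eq_zero.mp h1
    have : S₂ = {x} := by simpa [hS1] using hsp.symm
    simpa [hS1, this] using hsum.symm
  · have hS2 : S₂ = 0 := Multiset.card_eq_zero.mp h2
    have : S₁ = {x} := by simpa [hS2] using hsp.symm
    simpa [hS2, this] using hsum

lemma pm_cons_zero_iff {T : Multiset G} : IsPMZeroSum ((0 : G) ::ₘ T) ↔ IsPMZeroSum T := by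
  constructor
  · rintro ⟨S₁, S₂, hsp, hsum⟩
    have h0 : (0 : G) ∈ S₁ + S₂ := by rw [← hsp]; exact Multiset.mem_cons_self 0 T
    rcases Multiset.mem_add.mp h0 with h | h
    · obtain ⟨S₁', rfl⟩ := Multiset.exists_cons_of_mem h
      refine ⟨S₁', S₂, ?_, by simpa using hsum⟩
      have : (0:G) ::ₘ T = (0:G) ::ₘ (S₁' + S₂) := by rw [hsp, Multiset.cons_add]
      exact (Multiset.cons_inj_right _).mp this
    · obtain ⟨S₂', rfl⟩ := Multiset.exists_cons_of_mem h
      refine ⟨S₁, S₂', ?_, by simpa using hsum⟩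
      have : (0:G) ::ₘ T = (0:G) ::ₘ (S₁ + S₂') := by
        rw [hsp]
        rw [Multiset.add_cons]
      exact (Multiset.cons_inj_right _).mp this
  · rintro ⟨S₁, S₂, rfl, hsum⟩
    exact ⟨(0:G) ::ₘ S₁, S₂, by rw [Multiset.cons_add], by simpa using hsum⟩

lemma eq_rep_add_rep [DecidableEq G] {g h : G} (hgh : g ≠ h) {M : Multiset G}
    (hM : ∀ x ∈ M, x = g ∨ x = h) :
    M = replicate (M.count g) g + replicate (M.count h) h := by
  have h1 : Multiset.filter (fun x => x = g) M = replicate (M.count g) g :=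
    Multiset.filter_eq' M g
  have h2 : Multiset.filter (fun x => ¬ x = g) M = Multiset.filter (fun x => x = h) M := by
    apply Multiset.filter_congr
    intro x hx
    rcases hM x hx with rfl | rfl
    · exact iff_of_false (not_not_intro rfl) hgh
    · exact iff_of_true (Ne.symm hgh) rfl
  have h3 : Multiset.filter (fun x => x = h) M = replicate (M.count h) h :=
    Multiset.filter_eq' M h
  conv_lhs => rw [← Multiset.filter_add_not (fun x => x = g) M]
  rw [h1, h2, h3]

lemma pm_rep_add_rep_iff [DecidableEq G] {g h : G} (hgh : g ≠ h) (a b : ℕ) :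
    IsPMZeroSum (replicate a g + replicate b h) ↔
    ∃ i j : ℕ, i ≤ a ∧ j ≤ b ∧ i • g + j • h = (a - i) • g + (b - j) • h := by
  constructor
  · rintro ⟨S₁, S₂, hsp, hsum⟩
    set M := replicate a g + replicate b h with hM
    have hmem : ∀ x ∈ M, x = g ∨ x = h := by
      intro x hx
      rcases Multiset.mem_add.mp hx with hx | hx
      · exact Or.inl (Multiset.eq_of_mem_replicate hx)
      · exact Or.inr (Multiset.eq_of_mem_replicate hx)
    have hca : M.count g = a := by
      rw [hM, Multiset.count_add, Multiset.count_replicate, Multiset.count_replicate]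
      simp [hgh, Ne.symm hgh]
    have hcb : M.count h = b := by
      rw [hM, Multiset.count_add, Multiset.count_replicate, Multiset.count_replicate]
      simp [hgh, Ne.symm hgh]
    have hmem1 : ∀ x ∈ S₁, x = g ∨ x = h := fun x hx =>
      hmem x (by rw [hsp]; exact Multiset.mem_add.mpr (Or.inl hx))
    have hmem2 : ∀ x ∈ S₂, x = g ∨ x = h := fun x hx =>
      hmem x (by rw [hsp]; exact Multiset.mem_add.mpr (Or.inr hx))
    have e1 := eq_rep_add_rep hgh hmem1
    have e2 := eq_rep_add_rep hgh hmem2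
    have hia : S₁.count g + S₂.count g = a := by
      rw [← hca, hsp, Multiset.count_add]
    have hjb : S₁.count h + S₂.count h = b := by
      rw [← hcb, hsp, Multiset.count_add]
    refine ⟨S₁.count g, S₁.count h, by omega, by omega, ?_⟩
    have h2a : S₂.count g = a - S₁.count g := by omega
    have h2b : S₂.count h = b - S₁.count h := by omega
    rw [e1, e2, h2a, h2b] at hsum
    simpa [Multiset.sum_replicate] using hsum
  · rintro ⟨i, j, hi, hj, heq⟩
    refine ⟨replicate i g + replicate j h, replicate (a - i) g + replicate (b - j) h, ?_, ?_⟩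
    · rw [add_add_add_comm, ← Multiset.replicate_add, ← Multiset.replicate_add]
      congr 1 <;> congr 1 <;> omega
    · simpa [Multiset.sum_replicate] using heq

lemma pm_rep_iff {g : G} (a : ℕ) :
    IsPMZeroSum (replicate a g) ↔ ∃ i : ℕ, i ≤ a ∧ i • g = (a - i) • g := by
  constructor
  · rintro ⟨S₁, S₂, hsp, hsum⟩
    have hrep : ∀ (T : Multiset G), T ≤ replicate a g → T = replicate (Multiset.card T) g := by
      intro T hT
      rw [Multiset.eq_replicate_card]
      intro x hx
      exact Multiset.eq_of_mem_replicate (Multiset.mem_of_le hT hx)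
    have hle1 : S₁ ≤ replicate a g := by rw [hsp]; exact Multiset.le_add_right _ _
    have hle2 : S₂ ≤ replicate a g := by rw [hsp]; exact Multiset.le_add_left _ _
    have e1 := hrep S₁ hle1
    have e2 := hrep S₂ hle2
    have hcard : Multiset.card S₁ + Multiset.card S₂ = a := by
      have := congrArg Multiset.card hsp
      simpa using this.symm
    refine ⟨Multiset.card S₁, by omega, ?_⟩
    have h2 : Multiset.card S₂ = a - Multiset.card S₁ := by omega
    rw [e1, e2, h2] at hsum
    simpa [Multiset.sum_replicate] using hsum
  · rintro ⟨i, hi, heq⟩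
    refine ⟨replicate i g, replicate (a - i) g, ?_, ?_⟩
    · rw [← Multiset.replicate_add]; congr 1; omega
    · simpa [Multiset.sum_replicate] using heq

end Lemmas

section ZModArith

variable {n : ℕ}

lemma zmod_cancel (hn : n.Prime) {g x y : ZMod n} (hg : g ≠ 0) (h : x * g = y * g) : x = y := by
  haveI := Fact.mk hn
  exact mul_right_cancel₀ hg h

lemma verify_smul_eq {g : ZMod n} {i j a b : ℕ}
    (hmod : (i + (b - j)) ≡ ((a - i) + j) [MOD n]) :
    i • g + j • (-g) = (a - i) • g + (b - j) • (-g) := by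
  have hcast : ((i + (b - j) : ℕ) : ZMod n) = (((a - i) + j : ℕ) : ZMod n) :=
    (ZMod.natCast_eq_natCast_iff _ _ _).mpr hmod
  push_cast at hcast
  simp only [nsmul_eq_mul, mul_neg]
  linear_combination hcast * g

lemma two_ne_zero_zmod (hn : n.Prime) (ho : Odd n) : (2 : ZMod n) ≠ 0 := by
  intro h
  have h2 : ((2 : ℕ) : ZMod n) = 0 := by exact_mod_cast h
  have hdvd : n ∣ 2 := (ZMod.natCast_eq_zero_iff 2 n).mp h2
  have h1 : 1 ≤ n := hn.pos
  have h2n : n ≤ 2 := Nat.le_of_dvd (by norm_num) hdvd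
  rcases ho with ⟨k, hk⟩
  have : n = 1 := by omega
  exact absurd (this ▸ hn) (by decide)

lemma zmod_neg_ne_self (hn : n.Prime) (ho : Odd n) {g : ZMod n} (hg : g ≠ 0) : g ≠ -g := by
  intro h
  have h2 : (2 : ZMod n) * g = 0 := by ring_nf; linear_combination h
  haveI := Fact.mk hn
  rcases mul_eq_zero.mp h2 with h' | h'
  · exact two_ne_zero_zmod hn ho h'
  · exact hg h'

end ZModArith


section TwoGen

variable {n : ℕ}

/-- Characterization of pm zero-sum sequences over `{g, -g}`. -/
lemma pm_g_neg_iff (hn : n.Prime) (ho : Odd n) {g : ZMod n} (hg : g ≠ 0) (a b : ℕ) :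
    IsPMZeroSum (replicate a g + replicate b (-g)) ↔ Even (a + b) ∨ n ≤ a + b := by
  have hgneg : g ≠ -g := zmod_neg_ne_self hn ho hg
  rw [pm_rep_add_rep_iff hgneg]
  constructor
  · rintro ⟨i, j, hi, hj, heq⟩
    by_cases hev : Even (a + b)
    · exact Or.inl hev
    · right
      simp only [nsmul_eq_mul, mul_neg] at heq
      have heq2 : ((i + (b - j) : ℕ) : ZMod n) * g = (((a - i) + j : ℕ) : ZMod n) * g := by
        push_cast
        linear_combination heq
      have hcast := zmod_cancel hn hg heq2
      have hmod := (ZMod.natCast_eq_natCast_iff _ _ _).mp hcast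
      have hdvd : (n : ℤ) ∣ (((a - i) + j : ℕ) : ℤ) - ((i + (b - j) : ℕ) : ℤ) := hmod.dvd
      set D : ℤ := (((a - i) + j : ℕ) : ℤ) - ((i + (b - j) : ℕ) : ℤ) with hD
      have hsub1 : ((a - i : ℕ) : ℤ) = (a : ℤ) - i := by
        rw [Nat.cast_sub hi]
      have hsub2 : ((b - j : ℕ) : ℤ) = (b : ℤ) - j := by
        rw [Nat.cast_sub hj]
      have hDval : D = (a : ℤ) - 2 * i - (b : ℤ) + 2 * j := by
        rw [hD]; push_cast [Nat.cast_sub hi, Nat.cast_sub hj]; ring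
      have hodd : ¬ Even ((a : ℤ) + b) := by
        rw [Int.even_add] at *
        rw [Nat.even_add] at hev
        simp only [Int.even_coe_nat]
        tauto
      have hD0 : D ≠ 0 := by
        intro h0
        apply hodd
        have : (a : ℤ) + b = 2 * i - 2 * j + 2 * b := by omega
        exact ⟨i - j + b, by omega⟩
      have hn_le : (n : ℤ) ≤ |D| := Int.le_of_dvd (abs_pos.mpr hD0) ((dvd_abs _ _).mpr hdvd)
      have hDb : |D| ≤ (a : ℤ) + b := by
        rw [abs_le]; omega
      exact_mod_cast hn_le.trans hDb
  · rintro (hev | hle)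
    · rcases Nat.even_add.mp hev with h
      by_cases ha : Even a
      · have hb : Even b := by tauto
        obtain ⟨x, hx⟩ := ha
        obtain ⟨y, hy⟩ := hb
        refine ⟨x, y, by omega, by omega, verify_smul_eq ?_⟩
        have : x + (b - y) = (a - x) + y := by omega
        rw [this]
      · have hb : ¬ Even b := by tauto
        obtain ⟨x, hx⟩ := Nat.not_even_iff_odd.mp ha
        obtain ⟨y, hy⟩ := Nat.not_even_iff_odd.mp hb
        refine ⟨x + 1, y + 1, by omega, by omega, verify_smul_eq ?_⟩
        have : (x + 1) + (b - (y + 1)) = (a - (x + 1)) + (y + 1) := by omega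
        rw [this]
    · -- n ≤ a + b; if Even (a+b) use previous, else construct with ±n shift
      by_cases hev : Even (a + b)
      · rcases Nat.even_add.mp hev with h
        by_cases ha : Even a
        · have hb : Even b := by tauto
          obtain ⟨x, hx⟩ := ha
          obtain ⟨y, hy⟩ := hb
          refine ⟨x, y, by omega, by omega, verify_smul_eq ?_⟩
          have : x + (b - y) = (a - x) + y := by omega
          rw [this]
        · have hb : ¬ Even b := by tauto
          obtain ⟨x, hx⟩ := Nat.not_even_iff_odd.mp ha
          obtain ⟨y, hy⟩ := Nat.not_even_iff_odd.mp hb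
          refine ⟨x + 1, y + 1, by omega, by omega, verify_smul_eq ?_⟩
          have : (x + 1) + (b - (y + 1)) = (a - (x + 1)) + (y + 1) := by omega
          rw [this]
      · obtain ⟨m, hm⟩ := Nat.not_even_iff_odd.mp hev
        obtain ⟨k, hk⟩ := ho
        by_cases hc : b ≤ n + a
        · refine ⟨(n + a - b) / 2, 0, by omega, by omega, verify_smul_eq ?_⟩
          have h2i : 2 * ((n + a - b) / 2) = n + a - b := by omega
          have : (n + a - b) / 2 + (b - 0) = ((a - (n + a - b) / 2) + 0) + n := by omega
          rw [this]
          exact Nat.add_mod_right _ _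
        · refine ⟨0, (n + b - a) / 2, by omega, by omega, verify_smul_eq ?_⟩
          have h2j : 2 * ((n + b - a) / 2) = n + b - a := by omega
          have : ((a - 0) + (n + b - a) / 2) = (0 + (b - (n + b - a) / 2)) + n := by omega
          rw [this]
          exact (Nat.add_mod_right _ _).symm

end TwoGen


section Atoms

variable {n : ℕ}

lemma mem_PMZS {G : Type*} [AddCommGroup G] {G₁ : Set G} {A : Multiset G} :
    A ∈ PMZS G₁ ↔ (∀ x ∈ A, x ∈ G₁) ∧ IsPMZeroSum A := Iff.rfl

lemma mk_atom {G : Type*} [AddCommGroup G] {G₁ : Set G} {A : Multiset G}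
    (h1 : ∀ x ∈ A, x ∈ G₁) (h2 : IsPMZeroSum A) (h3 : A ≠ 0)
    (h4 : ∀ B C : Multiset G, A = B + C → IsPMZeroSum B → IsPMZeroSum C → B = 0 ∨ C = 0) :
    IsPMAtom (PMZS G₁) A :=
  ⟨⟨h1, h2⟩, h3, fun B C hB hC hbc => h4 B C hbc hB.2 hC.2⟩

lemma pm_rep_two (g : ZMod n) : IsPMZeroSum (replicate 2 g) := by
  refine ⟨{g}, {g}, ?_, rfl⟩
  rw [Multiset.singleton_add]
  rfl

lemma pm_of_sum_zero {G : Type*} [AddCommGroup G] {A : Multiset G} (h : A.sum = 0) :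
    IsPMZeroSum A := ⟨A, 0, by simp, by simp [h]⟩

lemma atom_of_card_two {G₁ : Set (ZMod n)} {A : Multiset (ZMod n)}
    (hmem : ∀ x ∈ A, x ∈ G₁) (hpm : IsPMZeroSum A) (hcard : Multiset.card A = 2)
    (h0 : (0 : ZMod n) ∉ A) : IsPMAtom (PMZS G₁) A := by
  refine mk_atom hmem hpm (by rintro rfl; simp at hcard) ?_
  intro B C hbc hB hC
  have hcards : Multiset.card B + Multiset.card C = 2 := by
    have := congrArg Multiset.card hbc; rw [hcard] at this; simpa using this.symm
  rcases Nat.lt_or_ge (Multiset.card B) 1 with h | h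
  · exact Or.inl (Multiset.card_eq_zero.mp (by omega))
  rcases Nat.lt_or_ge (Multiset.card C) 1 with h' | h'
  · exact Or.inr (Multiset.card_eq_zero.mp (by omega))
  exfalso
  have hB1 : Multiset.card B = 1 := by omega
  obtain ⟨z, rfl⟩ := Multiset.card_eq_one.mp hB1
  have hz : z = 0 := pm_singleton hB
  apply h0
  rw [hbc, hz]
  exact Multiset.mem_add.mpr (Or.inl (Multiset.mem_singleton_self 0))

/-- Sequences of total length `n` over `{g, -g}` are atoms. -/
lemma atom_mixed_n (hn : n.Prime) (ho : Odd n) {g : ZMod n} (hg : g ≠ 0)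
    {G₁ : Set (ZMod n)} {a b : ℕ} (hab : a + b = n)
    (hmem : ∀ x ∈ (replicate a g + replicate b (-g) : Multiset (ZMod n)), x ∈ G₁) :
    IsPMAtom (PMZS G₁) (replicate a g + replicate b (-g)) := by
  have hgneg : g ≠ -g := zmod_neg_ne_self hn ho hg
  have hpm : IsPMZeroSum (replicate a g + replicate b (-g)) :=
    (pm_g_neg_iff hn ho hg a b).mpr (Or.inr (by omega))
  refine mk_atom hmem hpm ?_ ?_
  · intro h
    have := congrArg Multiset.card h
    simp at this
    have := hn.pos
    omega
  · intro B C hbc hB hC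
    classical
    have hmemB : ∀ x ∈ B, x = g ∨ x = -g := by
      intro x hx
      have : x ∈ (replicate a g + replicate b (-g) : Multiset (ZMod n)) := by
        rw [hbc]; exact Multiset.mem_add.mpr (Or.inl hx)
      rcases Multiset.mem_add.mp this with h | h
      · exact Or.inl (Multiset.eq_of_mem_replicate h)
      · exact Or.inr (Multiset.eq_of_mem_replicate h)
    have hmemC : ∀ x ∈ C, x = g ∨ x = -g := by
      intro x hx
      have : x ∈ (replicate a g + replicate b (-g) : Multiset (ZMod n)) := by
        rw [hbc]; exact Multiset.mem_add.mpr (Or.inr hx)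
      rcases Multiset.mem_add.mp this with h | h
      · exact Or.inl (Multiset.eq_of_mem_replicate h)
      · exact Or.inr (Multiset.eq_of_mem_replicate h)
    have eB := eq_rep_add_rep hgneg hmemB
    have eC := eq_rep_add_rep hgneg hmemC
    rw [eB] at hB
    rw [eC] at hC
    have hcB := (pm_g_neg_iff hn ho hg _ _).mp hB
    have hcC := (pm_g_neg_iff hn ho hg _ _).mp hC
    have hcards : Multiset.card B + Multiset.card C = n := by
      have := congrArg Multiset.card hbc
      simp at this
      omega
    have hcB' : Multiset.card B = B.count g + B.count (-g) := by
      conv_lhs => rw [eB]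
      simp [Multiset.count_replicate, hgneg, Ne.symm hgneg]
    have hcC' : Multiset.card C = C.count g + C.count (-g) := by
      conv_lhs => rw [eC]
      simp [Multiset.count_replicate, hgneg, Ne.symm hgneg]
    by_contra hcon
    push_neg at hcon
    obtain ⟨hB0, hC0⟩ := hcon
    have hBpos : 0 < Multiset.card B := Multiset.card_pos.mpr hB0
    have hCpos : 0 < Multiset.card C := Multiset.card_pos.mpr hC0
    rcases hcB with hev | hle
    · rcases hcC with hev' | hle'
      · rw [← hcB'] at hev
        rw [← hcC'] at hev'
        rcases hev with ⟨p, hp⟩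
        rcases hev' with ⟨q, hq⟩
        rcases ho with ⟨k, hk⟩
        omega
      · rw [← hcC'] at hle'; omega
    · rw [← hcB'] at hle; omega

end Atoms


section Classify

variable {n : ℕ}

lemma rep_rep_mem_PMZS {G₁ : Set (ZMod n)} {g : ZMod n} {a b : ℕ}
    (hpm : IsPMZeroSum (replicate a g + replicate b (-g)))
    (hga : 0 < a → g ∈ G₁) (hgb : 0 < b → -g ∈ G₁) :
    (replicate a g + replicate b (-g) : Multiset (ZMod n)) ∈ PMZS G₁ := by
  refine ⟨?_, hpm⟩
  intro x hx
  rcases Multiset.mem_add.mp hx with h | h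
  · rcases Multiset.eq_of_mem_replicate h with rfl
    exact hga (by by_contra hc; push_neg at hc; interval_cases a; simp at h)
  · rcases Multiset.eq_of_mem_replicate h with rfl
    exact hgb (by by_contra hc; push_neg at hc; interval_cases b; simp at h)

lemma atom_classify (hn : n.Prime) (ho : Odd n) {g : ZMod n} (hg : g ≠ 0)
    {G₁ : Set (ZMod n)} (hG : G₁ ⊆ {0, g, -g}) {A : Multiset (ZMod n)}
    (hA : IsPMAtom (PMZS G₁) A) :
    A = {(0 : ZMod n)} ∨ ((0 : ZMod n) ∉ A ∧ (Multiset.card A = 2 ∨ Multiset.card A = n)) := by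
  classical
  obtain ⟨⟨hmem, hpm⟩, hne, hdec⟩ := hA
  have hgneg : g ≠ -g := zmod_neg_ne_self hn ho hg
  by_cases h0 : (0 : ZMod n) ∈ A
  · left
    obtain ⟨A', rfl⟩ := Multiset.exists_cons_of_mem h0
    have hpm' : IsPMZeroSum A' := pm_cons_zero_iff.mp hpm
    have hsplit : (0 : ZMod n) ::ₘ A' = {(0 : ZMod n)} + A' := by
      rw [Multiset.singleton_add]
    have h1 : ({(0 : ZMod n)} : Multiset (ZMod n)) ∈ PMZS G₁ := by
      refine ⟨?_, 0, {0}, by simp, by simp⟩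
      intro x hx
      rw [Multiset.mem_singleton.mp hx]
      exact hmem 0 h0
    have h2 : A' ∈ PMZS G₁ := by
      refine ⟨fun x hx => hmem x (Multiset.mem_cons_of_mem hx), hpm'⟩
    rcases hdec _ _ h1 h2 hsplit with h | h
    · exact absurd h (by simp)
    · rw [h]
      rfl
  · right
    refine ⟨h0, ?_⟩
    have hmem' : ∀ x ∈ A, x = g ∨ x = -g := by
      intro x hx
      rcases hG (hmem x hx) with h | h | h
      · exact absurd (h ▸ hx) h0
      · exact Or.inl h
      · exact Or.inr h
    have eA := eq_rep_add_rep hgneg hmem'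
    set a := A.count g with ha
    set b := A.count (-g) with hb
    have hcard : Multiset.card A = a + b := by
      conv_lhs => rw [eA]
      simp
    have hpm2 : IsPMZeroSum (replicate a g + replicate b (-g)) := eA ▸ hpm
    have hchar := (pm_g_neg_iff hn ho hg a b).mp hpm2
    have hcpos : 0 < a + b := by
      rcases Nat.eq_zero_or_pos (a + b) with h | h
      · exfalso; apply hne
        rw [eA]
        have : a = 0 ∧ b = 0 := by omega
        simp [this.1, this.2]
      · exact h
    -- decomposition helper: if we can split off a pair with pm remainder, contradiction
    have hsplitg : 4 ≤ a + b → 2 ≤ a → IsPMZeroSum (replicate (a - 2) g + replicate b (-g)) → False := by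
      intro hab4 h2a hpmrest
      have hBmem : (replicate 2 g : Multiset (ZMod n)) ∈ PMZS G₁ := by
        refine ⟨?_, pm_rep_two g⟩
        intro x hx
        rw [Multiset.eq_of_mem_replicate hx]
        exact hmem g (by rw [eA]; exact Multiset.mem_add.mpr (Or.inl (Multiset.mem_replicate.mpr ⟨by omega, rfl⟩)))
      have hCmem : (replicate (a - 2) g + replicate b (-g) : Multiset (ZMod n)) ∈ PMZS G₁ := by
        refine ⟨?_, hpmrest⟩
        intro x hx
        apply hmem
        rw [eA]
        rcases Multiset.mem_add.mp hx with h | h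
        · exact Multiset.mem_add.mpr (Or.inl (Multiset.mem_replicate.mpr
            ⟨by omega, Multiset.eq_of_mem_replicate h⟩))
        · exact Multiset.mem_add.mpr (Or.inr h)
      have hsp : A = replicate 2 g + (replicate (a - 2) g + replicate b (-g)) := by
        rw [eA, ← add_assoc, ← Multiset.replicate_add]
        congr 2
        omega
      rcases hdec _ _ hBmem hCmem hsp with h | h
      · have := congrArg Multiset.card h; simp at this
      · have := congrArg Multiset.card h; simp at this; omega
    have hsplitb : 4 ≤ a + b → 2 ≤ b → IsPMZeroSum (replicate a g + replicate (b - 2) (-g)) → False := by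
      intro hab4 h2b hpmrest
      have hBmem : (replicate 2 (-g) : Multiset (ZMod n)) ∈ PMZS G₁ := by
        refine ⟨?_, pm_rep_two (-g)⟩
        intro x hx
        rw [Multiset.eq_of_mem_replicate hx]
        exact hmem (-g) (by rw [eA]; exact Multiset.mem_add.mpr (Or.inr (Multiset.mem_replicate.mpr ⟨by omega, rfl⟩)))
      have hCmem : (replicate a g + replicate (b - 2) (-g) : Multiset (ZMod n)) ∈ PMZS G₁ := by
        refine ⟨?_, hpmrest⟩
        intro x hx
        apply hmem
        rw [eA]
        rcases Multiset.mem_add.mp hx with h | h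
        · exact Multiset.mem_add.mpr (Or.inl h)
        · exact Multiset.mem_add.mpr (Or.inr (Multiset.mem_replicate.mpr
            ⟨by omega, Multiset.eq_of_mem_replicate h⟩))
      have hsp : A = replicate 2 (-g) + (replicate a g + replicate (b - 2) (-g)) := by
        rw [eA, add_comm (replicate a g) (replicate (b-2) (-g)), ← add_assoc, ← Multiset.replicate_add]
        rw [add_comm (replicate a g)]
        congr 2
        omega
      rcases hdec _ _ hBmem hCmem hsp with h | h
      · have := congrArg Multiset.card h; simp at this
      · have := congrArg Multiset.card h; simp at this; omega
    rw [hcard]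
    rcases hchar with hev | hle
    · -- even total: must be exactly 2
      left
      by_contra hc
      have h4 : 4 ≤ a + b := by
        rcases hev with ⟨p, hp⟩
        omega
      have hrest : Even (a + b - 2) := by
        rcases hev with ⟨p, hp⟩
        exact ⟨p - 1, by omega⟩
      rcases Nat.lt_or_ge a 2 with hlt | hge
      · have h2b : 2 ≤ b := by omega
        exact hsplitb h4 h2b ((pm_g_neg_iff hn ho hg a (b - 2)).mpr (Or.inl (by
          rcases hev with ⟨p, hp⟩; exact ⟨p - 1, by omega⟩)))
      · exact hsplitg h4 hge ((pm_g_neg_iff hn ho hg (a - 2) b).mpr (Or.inl (by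
          rcases hev with ⟨p, hp⟩; exact ⟨p - 1, by omega⟩)))
    · -- odd case is impossible unless exactly n
      rcases Nat.eq_or_lt_of_le hle with h | h
      · right; omega
      · exfalso
        have hge2 : n + 2 ≤ a + b ∨ Even (a + b) := by
          rcases Nat.even_or_odd (a + b) with hev | hodd
          · exact Or.inr hev
          · left
            rcases ho with ⟨k, hk⟩
            rcases hodd with ⟨p, hp⟩
            omega
        have hnn := hn.two_le
        have hma : 2 ≤ a ∨ 2 ≤ b := by omega
        rcases hge2 with hge2 | hev
        · have hrest : IsPMZeroSum (replicate (a - 2) g + replicate b (-g)) ∨ True := Or.inr trivial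
          rcases hma with h2 | h2
          · exact hsplitg (by omega) h2 ((pm_g_neg_iff hn ho hg (a - 2) b).mpr (Or.inr (by omega)))
          · exact hsplitb (by omega) h2 ((pm_g_neg_iff hn ho hg a (b - 2)).mpr (Or.inr (by omega)))
        · rcases hev with ⟨p, hp⟩
          have hnn := hn.two_le
          rcases hma with h2 | h2
          · exact hsplitg (by omega) h2 ((pm_g_neg_iff hn ho hg (a - 2) b).mpr (Or.inl ⟨p - 1, by omega⟩))
          · exact hsplitb (by omega) h2 ((pm_g_neg_iff hn ho hg a (b - 2)).mpr (Or.inl ⟨p - 1, by omega⟩))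

end Classify


section Counting

variable {n : ℕ}

open Classical in
/-- Counting invariant for factorizations over `{0, g, -g}`. -/
lemma length_invariant (hn : n.Prime) (ho : Odd n) {g : ZMod n} (hg : g ≠ 0)
    {G₁ : Set (ZMod n)} (hG : G₁ ⊆ {0, g, -g}) (l : List (Multiset (ZMod n)))
    (hl : ∀ A ∈ l, IsPMAtom (PMZS G₁) A) :
    2 * l.length + (n - 2) * (l.countP (fun A => decide (Multiset.card A = n)))
      = Multiset.count 0 l.sum + Multiset.card l.sum := by
  classical
  induction l with
  | nil => simp
  | cons A l ih =>
    have hA := hl A List.mem_cons_self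
    have hrest := ih (fun B hB => hl B (List.mem_cons_of_mem A hB))
    have hn2 := hn.two_le
    have hn3 : 3 ≤ n := by
      rcases ho with ⟨k, hk⟩
      omega
    rw [List.countP_cons, List.sum_cons, List.length_cons]
    rcases atom_classify hn ho hg hG hA with h1 | ⟨h0, h2⟩
    · have hcard : Multiset.card A = 1 := by rw [h1]; rfl
      have hcnt : Multiset.count 0 A = 1 := by rw [h1]; simp
      have hdec : ¬ (Multiset.card A = n) := by omega
      have hb : decide (Multiset.card A = n) = false := by simp [hdec]
      rw [hb]
      simp only [Bool.false_eq_true, if_false, Nat.add_zero]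
      rw [Multiset.count_add, Multiset.card_add, hcnt, hcard]
      omega
    · have hcnt : Multiset.count 0 A = 0 := Multiset.count_eq_zero_of_notMem h0
      rcases h2 with h2 | h2
      · have hdec : ¬ (Multiset.card A = n) := by omega
        have hb : decide (Multiset.card A = n) = false := by simp [hdec]
        rw [hb]
        simp only [Bool.false_eq_true, if_false, Nat.add_zero]
        rw [Multiset.count_add, Multiset.card_add, hcnt, h2]
        omega
      · have hb : decide (Multiset.card A = n) = true := by simp [h2]
        rw [hb]
        simp only [if_true]
        rw [Multiset.count_add, Multiset.card_add, hcnt, h2]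
        have hexp : (n - 2) * (List.countP (fun A => decide (Multiset.card A = n)) l + 1)
            = (n - 2) * List.countP (fun A => decide (Multiset.card A = n)) l + (n - 2) := by
          ring
        rw [hexp]
        omega

end Counting


section Pairs

variable {n : ℕ}

lemma atom_rep_two {G₁ : Set (ZMod n)} {g : ZMod n} (hg : g ≠ 0) (hmem : g ∈ G₁) :
    IsPMAtom (PMZS G₁) (replicate 2 g) := by
  refine atom_of_card_two ?_ (pm_rep_two g) (by simp) ?_
  · intro x hx
    rw [Multiset.eq_of_mem_replicate hx]; exact hmem
  · intro h
    rw [Multiset.eq_of_mem_replicate h] at hg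
    exact hg rfl

lemma atom_mixed_pair (ho : Odd n) {G₁ : Set (ZMod n)} {g : ZMod n} (hg : g ≠ 0)
    (hmem : g ∈ G₁) (hmem' : -g ∈ G₁) :
    IsPMAtom (PMZS G₁) ({g} + {-g} : Multiset (ZMod n)) := by
  refine atom_of_card_two ?_ (pm_of_sum_zero (by simp)) (by simp) ?_
  · intro x hx
    rcases Multiset.mem_add.mp hx with h | h
    · rw [Multiset.mem_singleton.mp h]; exact hmem
    · rw [Multiset.mem_singleton.mp h]; exact hmem'
  · intro h
    rcases Multiset.mem_add.mp h with h | h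
    · exact hg (Multiset.mem_singleton.mp h).symm
    · exact hg (by simpa using (Multiset.mem_singleton.mp h).symm)

lemma pairs_factorization (hn : n.Prime) (ho : Odd n) {g : ZMod n} (hg : g ≠ 0)
    {G₁ : Set (ZMod n)} (a b : ℕ) (hab : a + b = 2 * n)
    (hga : 0 < a → g ∈ G₁) (hgb : 0 < b → -g ∈ G₁) :
    ∃ P : List (Multiset (ZMod n)), (∀ A ∈ P, IsPMAtom (PMZS G₁) A) ∧
      P.sum = replicate a g + replicate b (-g) ∧ P.length = n := by
  have hgneg : (-g : ZMod n) ≠ 0 := neg_ne_zero.mpr hg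
  by_cases hev : Even a
  · have hevb : Even b := by
      rcases hev with ⟨p, hp⟩
      exact ⟨n - p, by omega⟩
    refine ⟨List.replicate (a / 2) (replicate 2 g) ++ List.replicate (b / 2) (replicate 2 (-g)),
      ?_, ?_, ?_⟩
    · intro A hA
      rcases List.mem_append.mp hA with h | h
      · have := List.mem_replicate.mp h
        rw [this.2]
        exact atom_rep_two hg (hga (by omega))
      · have := List.mem_replicate.mp h
        rw [this.2]
        exact atom_rep_two hgneg (hgb (by omega))
    · rw [List.sum_append, List.sum_replicate, List.sum_replicate,
        Multiset.nsmul_replicate, Multiset.nsmul_replicate]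
      congr 2
      · rcases hev with ⟨p, hp⟩; omega
      · rcases hevb with ⟨p, hp⟩; omega
    · rw [List.length_append, List.length_replicate, List.length_replicate]
      rcases hev with ⟨p, hp⟩
      rcases hevb with ⟨q, hq⟩
      omega
  · have hodda : a % 2 = 1 := Nat.odd_iff.mp (Nat.not_even_iff_odd.mp hev)
    have hoddb : b % 2 = 1 := by omega
    have ha1 : 0 < a := by omega
    have hb1 : 0 < b := by omega
    refine ⟨({g} + {-g} : Multiset (ZMod n)) ::
        (List.replicate ((a - 1) / 2) (replicate 2 g) ++
         List.replicate ((b - 1) / 2) (replicate 2 (-g))), ?_, ?_, ?_⟩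
    · intro A hA
      rcases List.mem_cons.mp hA with h | h
      · rw [h]
        exact atom_mixed_pair ho hg (hga ha1) (hgb hb1)
      rcases List.mem_append.mp h with h | h
      · have := List.mem_replicate.mp h
        rw [this.2]
        exact atom_rep_two hg (hga ha1)
      · have := List.mem_replicate.mp h
        rw [this.2]
        exact atom_rep_two hgneg (hgb hb1)
    · rw [List.sum_cons, List.sum_append, List.sum_replicate, List.sum_replicate,
        Multiset.nsmul_replicate, Multiset.nsmul_replicate]
      have e1 : (a - 1) / 2 * 2 = a - 1 := by omega
      have e2 : (b - 1) / 2 * 2 = b - 1 := by omega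
      rw [e1, e2]
      have hrg : (replicate a g : Multiset (ZMod n)) = {g} + replicate (a - 1) g := by
        rw [← Multiset.replicate_one (a := g), ← Multiset.replicate_add]
        congr 1
        omega
      have hrb : (replicate b (-g) : Multiset (ZMod n)) = {-g} + replicate (b - 1) (-g) := by
        rw [← Multiset.replicate_one (a := -g), ← Multiset.replicate_add]
        congr 1
        omega
      rw [hrg, hrb]
      abel
    · simp only [List.length_cons, List.length_append, List.length_replicate]
      omega

end Pairs


section Gap

variable {n : ℕ}

open Classical in
lemma gap_lemma (hn : n.Prime) (ho : Odd n) {g : ZMod n} (hg : g ≠ 0)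
    {G₁ : Set (ZMod n)} (hG : G₁ ⊆ {0, g, -g}) {X : Multiset (ZMod n)} {x y : ℕ}
    (hx : x ∈ LengthSet (PMZS G₁) X) (hy : y ∈ LengthSet (PMZS G₁) X) (hxy : x < y) :
    (n - 2) ≤ y - x ∧ x + (n - 2) ∈ LengthSet (PMZS G₁) X := by
  classical
  obtain ⟨lx, hlx, hlxsum, hlxlen⟩ := hx
  obtain ⟨ly, hly, hlysum, hlylen⟩ := hy
  have hn3 : 3 ≤ n := by
    have := hn.two_le; rcases ho with ⟨k, hk⟩; omega
  set p : Multiset (ZMod n) → Bool := fun A => decide (Multiset.card A = n) with hp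
  have hinvx := length_invariant hn ho hg hG lx hlx
  have hinvy := length_invariant hn ho hg hG ly hly
  rw [hlxsum, hlxlen] at hinvx
  rw [hlysum, hlylen] at hinvy
  set cx := lx.countP p with hcx
  set cy := ly.countP p with hcy
  set d := n - 2 with hd
  have hoddd : Odd d := by
    rcases ho with ⟨k, hk⟩
    exact ⟨k - 1, by omega⟩
  have hcylt : cy < cx := by
    by_contra hc
    push_neg at hc
    have := Nat.mul_le_mul_left d hc
    omega
  set t := cx - cy with ht
  have hct : cx = cy + t := by omega
  have hexp : d * (cy + t) = d * cy + d * t := Nat.mul_add d cy t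
  rw [hct] at hinvx
  have h2 : 2 * (y - x) = d * t := by omega
  have htev : 2 ∣ t := by
    have hdvd : 2 ∣ d * t := ⟨y - x, by omega⟩
    have hcop : Nat.Coprime 2 d := Nat.coprime_two_left.mpr hoddd
    exact (Nat.Coprime.dvd_of_dvd_mul_left hcop hdvd)
  obtain ⟨u, hu⟩ := htev
  have hu1 : 1 ≤ u := by omega
  have hyx : y - x = d * u := by
    have : d * t = 2 * (d * u) := by rw [hu]; ring
    omega
  have hge : d ≤ y - x := by
    rw [hyx]
    calc d = d * 1 := by ring
    _ ≤ d * u := Nat.mul_le_mul_left d hu1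
  refine ⟨hge, ?_⟩
  -- extract two atoms of cardinality n from lx
  have hcx2 : 2 ≤ cx := by omega
  have hxlen2 : 2 ≤ lx.length := le_trans hcx2 (by rw [hcx]; exact List.countP_le_length)
  have hpos1 : 0 < lx.countP p := by omega
  obtain ⟨A₁, hA₁mem, hA₁p⟩ := List.countP_pos_iff.mp hpos1
  set l' := lx.erase A₁ with hl'
  have hperm1 : lx.Perm (A₁ :: l') := List.perm_cons_erase hA₁mem
  have hcntl' : l'.countP p + 1 = cx := by
    have := hperm1.countP_eq p
    rw [List.countP_cons, hA₁p] at this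
    simp at this
    omega
  have hpos2 : 0 < l'.countP p := by omega
  obtain ⟨A₂, hA₂mem, hA₂p⟩ := List.countP_pos_iff.mp hpos2
  set l'' := l'.erase A₂ with hl''
  have hperm2 : l'.Perm (A₂ :: l'') := List.perm_cons_erase hA₂mem
  have hcardA₁ : Multiset.card A₁ = n := of_decide_eq_true hA₁p
  have hcardA₂ : Multiset.card A₂ = n := of_decide_eq_true hA₂p
  have hA₁atom : IsPMAtom (PMZS G₁) A₁ := hlx A₁ hA₁mem
  have hA₂atom : IsPMAtom (PMZS G₁) A₂ := hlx A₂ (List.mem_of_mem_erase hA₂mem)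
  have h0A₁ : (0 : ZMod n) ∉ A₁ := by
    rcases atom_classify hn ho hg hG hA₁atom with h | h
    · exfalso; rw [h] at hcardA₁; simp at hcardA₁; omega
    · exact h.1
  have h0A₂ : (0 : ZMod n) ∉ A₂ := by
    rcases atom_classify hn ho hg hG hA₂atom with h | h
    · exfalso; rw [h] at hcardA₂; simp at hcardA₂; omega
    · exact h.1
  set M := A₁ + A₂ with hM
  have hMmemG : ∀ z ∈ M, z ∈ G₁ := by
    intro z hz
    rcases Multiset.mem_add.mp hz with h | h
    · exact hA₁atom.1.1 z h
    · exact hA₂atom.1.1 z h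
  have hMmem : ∀ z ∈ M, z = g ∨ z = -g := by
    intro z hz
    rcases hG (hMmemG z hz) with h | h | h
    · exfalso
      rcases Multiset.mem_add.mp hz with h' | h'
      · exact h0A₁ (h ▸ h')
      · exact h0A₂ (h ▸ h')
    · exact Or.inl h
    · exact Or.inr h
  have hgneg : g ≠ -g := zmod_neg_ne_self hn ho hg
  have eM := eq_rep_add_rep hgneg hMmem
  set a := M.count g with hA
  set b := M.count (-g) with hB
  have hab : a + b = 2 * n := by
    have h1 : Multiset.card M = 2 * n := by
      rw [hM, Multiset.card_add, hcardA₁, hcardA₂]; ring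
    have h2 : Multiset.card M = a + b := by
      conv_lhs => rw [eM]
      simp
    omega
  obtain ⟨P, hPatoms, hPsum, hPlen⟩ := pairs_factorization hn ho hg a b hab
    (fun hpos => hMmemG g (Multiset.count_pos.mp hpos))
    (fun hpos => hMmemG (-g) (Multiset.count_pos.mp hpos))
  refine ⟨P ++ l'', ?_, ?_, ?_⟩
  · intro A hA
    rcases List.mem_append.mp hA with h | h
    · exact hPatoms A h
    · exact hlx A (List.mem_of_mem_erase (List.mem_of_mem_erase h))
  · rw [List.sum_append, hPsum, ← eM]
    have hsum1 : lx.sum = A₁ + l'.sum := by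
      rw [hperm1.sum_eq]; simp
    have hsum2 : l'.sum = A₂ + l''.sum := by
      rw [hperm2.sum_eq]; simp
    rw [← hlxsum, hsum1, hsum2, hM]
    abel
  · rw [List.length_append, hPlen]
    have hlen1 : lx.length = l'.length + 1 := by
      rw [hperm1.length_eq]; simp
    have hlen2 : l'.length = l''.length + 1 := by
      rw [hperm2.length_eq]; simp
    omega

end Gap


section DivClosed

variable {n : ℕ}

lemma rep_two_eq_sing_add (g : ZMod n) : (replicate 2 g : Multiset (ZMod n)) = {g} + {g} := by
  rw [Multiset.singleton_add, Multiset.replicate_succ, Multiset.replicate_one]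

lemma mem_pmzs_univ {X : Multiset (ZMod n)} (hpm : IsPMZeroSum X) :
    X ∈ PMZS (Set.univ : Set (ZMod n)) := ⟨fun _ _ => Set.mem_univ _, hpm⟩

lemma divclosed_eq (S : AddSubmonoid (Multiset (ZMod n)))
    (hdc : IsDivClosed (PMZS (Set.univ : Set (ZMod n))) S) :
    S = PMZS {g : ZMod n | ∃ s ∈ S, g ∈ s} := by
  set G₁ : Set (ZMod n) := {g : ZMod n | ∃ s ∈ S, g ∈ s} with hG₁
  have step1 : ∀ g ∈ G₁, (replicate 2 g : Multiset (ZMod n)) ∈ S := by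
    rintro g ⟨s, hs, hgs⟩
    obtain ⟨t, rfl⟩ := Multiset.exists_cons_of_mem hgs
    have hss : (g ::ₘ t) + (g ::ₘ t) ∈ S := add_mem hs hs
    have hrw : (g ::ₘ t) + (g ::ₘ t) = replicate 2 g + (t + t) := by
      rw [rep_two_eq_sing_add, ← Multiset.singleton_add]
      abel
    apply hdc.2 _ hss
    · exact mem_pmzs_univ (by rw [rep_two_eq_sing_add]; exact pm_double {g})
    · exact ⟨t + t, mem_pmzs_univ (pm_double t), hrw⟩
  have step2 : ∀ X : Multiset (ZMod n), (∀ g ∈ X, g ∈ G₁) → X + X ∈ S := by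
    intro X
    induction X using Multiset.induction_on with
    | empty => intro _; simpa using S.zero_mem
    | cons g X ih =>
      intro hmem
      have h1 : replicate 2 g + (X + X) ∈ S :=
        add_mem (step1 g (hmem g (Multiset.mem_cons_self g X)))
          (ih (fun z hz => hmem z (Multiset.mem_cons_of_mem hz)))
      have hrw : (g ::ₘ X) + (g ::ₘ X) = replicate 2 g + (X + X) := by
        rw [rep_two_eq_sing_add, ← Multiset.singleton_add]
        abel
      rw [hrw]
      exact h1
  ext X
  constructor
  · intro hX
    exact ⟨fun g hg => ⟨X, hX, hg⟩, (hdc.1 hX).2⟩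
  · rintro ⟨hmem, hpm⟩
    have hXX : X + X ∈ S := step2 X hmem
    exact hdc.2 _ hXX X (mem_pmzs_univ hpm) ⟨X, mem_pmzs_univ hpm, rfl⟩

end DivClosed

section CaseB

variable {n : ℕ}

lemma deltaM_subset_caseB (hn : n.Prime) (ho : Odd n) {g : ZMod n} (hg : g ≠ 0)
    {G₁ : Set (ZMod n)} (hG : G₁ ⊆ {0, g, -g}) :
    DeltaM (PMZS G₁) ⊆ {n - 2} := by
  rintro d ⟨X, hX, hpos, a, haL, hadL, hsucc⟩
  have hn3 : 3 ≤ n := by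
    have := hn.two_le; rcases ho with ⟨k, hk⟩; omega
  have hgap := gap_lemma hn ho hg hG haL hadL (by omega)
  have h1 : n - 2 ≤ d := by omega
  have h2 := hsucc _ hgap.2 (by omega)
  simp only [Set.mem_singleton_iff]
  omega

end CaseB


section CaseAAtoms

variable {n : ℕ}

lemma atom_rep_n (hn : n.Prime) (ho : Odd n) {g : ZMod n} (hg : g ≠ 0)
    {G₁ : Set (ZMod n)} (hmem : g ∈ G₁) : IsPMAtom (PMZS G₁) (replicate n g) := by
  have h := atom_mixed_n hn ho hg (G₁ := G₁) (a := n) (b := 0) (by omega) ?_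
  · simpa using h
  · intro x hx
    simp only [Multiset.replicate_zero, add_zero] at hx
    rw [Multiset.eq_of_mem_replicate hx]
    exact hmem

/-- From a pm zero-sum sequence `g^a h^b` with `h = m' • g`, extract a divisibility. -/
lemma pm_arith (hn : n.Prime) {g h : ZMod n} (hg : g ≠ 0) (hgh : g ≠ h) {m' : ℕ}
    (hm : h = (m' : ZMod n) * g) {a b : ℕ}
    (hpm : IsPMZeroSum (replicate a g + replicate b h)) :
    ∃ i j : ℕ, i ≤ a ∧ j ≤ b ∧ (n : ℤ) ∣ ((a : ℤ) - 2 * i) + ((b : ℤ) - 2 * j) * m' := by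
  obtain ⟨i, j, hi, hj, heq⟩ := (pm_rep_add_rep_iff hgh a b).mp hpm
  refine ⟨i, j, hi, hj, ?_⟩
  rw [hm] at heq
  simp only [nsmul_eq_mul] at heq
  have heq2 : ((i + j * m' : ℕ) : ZMod n) * g = (((a - i) + (b - j) * m' : ℕ) : ZMod n) * g := by
    push_cast
    linear_combination heq
  have hcast := zmod_cancel hn hg heq2
  have hmod := (ZMod.natCast_eq_natCast_iff _ _ _).mp hcast
  have hdvd := hmod.dvd
  have h1 : ((a - i : ℕ) : ℤ) = (a : ℤ) - i := by rw [Nat.cast_sub hi]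
  have h2 : ((b - j : ℕ) : ℤ) = (b : ℤ) - j := by rw [Nat.cast_sub hj]
  have : (((a - i) + (b - j) * m' : ℕ) : ℤ) - ((i + j * m' : ℕ) : ℤ)
      = ((a : ℤ) - 2 * i) + ((b : ℤ) - 2 * j) * m' := by
    push_cast [Nat.cast_sub hi, Nat.cast_sub hj]
    ring
  rw [this] at hdvd
  exact hdvd

lemma mu_bound (hn : n.Prime) {m' μ : ℕ} (hm1 : 2 ≤ m') (hm2 : m' ≤ n - 2)
    (hμ : μ = min m' (n - m')) {D : ℤ} {c : ℕ} (hD : |D| ≤ c) (hc : c < μ)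
    (hdvd : (n : ℤ) ∣ D + m' ∨ (n : ℤ) ∣ D - m') : False := by
  have hn2 := hn.two_le
  have hμ1 : μ ≤ m' := by omega
  have hμ2 : μ ≤ n - m' := by omega
  have habs : |D| < μ := by omega
  have hDlt : D < μ ∧ -(μ : ℤ) < D := by
    rw [abs_lt] at habs
    constructor <;> [exact habs.2; exact habs.1]
  rcases hdvd with hdvd | hdvd
  · have hpos : 0 < D + m' := by
      have : (μ : ℤ) ≤ m' := by exact_mod_cast hμ1
      omega
    have hlt : D + m' < n := by
      have : (μ : ℤ) + m' ≤ n := by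
        have : μ + m' ≤ n := by omega
        exact_mod_cast this
      omega
    have := Int.eq_zero_of_abs_lt_dvd hdvd (by rw [abs_lt]; omega)
    omega
  · have hneg : D - m' < 0 := by
      have : (μ : ℤ) ≤ m' := by exact_mod_cast hμ1
      omega
    have hgt : -(n : ℤ) < D - m' := by
      have h1 : (m' : ℤ) ≤ n - 2 := by
        have : (m' : ℕ) ≤ n - 2 := hm2
        have h2 : ((n - 2 : ℕ) : ℤ) = (n : ℤ) - 2 := by
          rw [Nat.cast_sub hn2]; norm_num
        omega
      omega
    have := Int.eq_zero_of_abs_lt_dvd hdvd (by rw [abs_lt]; omega)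
    omega

/-- `g^μ h` is an atom, where `h = m' g` and `μ = min m' (n - m')`. -/
lemma atom_W (hn : n.Prime) {g h : ZMod n} (hg : g ≠ 0) (hgh : g ≠ h) {m' : ℕ}
    (hm : h = (m' : ZMod n) * g) (hm1 : 2 ≤ m') (hm2 : m' ≤ n - 2) {μ : ℕ}
    (hμ : μ = min m' (n - m')) {G₁ : Set (ZMod n)} (hgG : g ∈ G₁) (hhG : h ∈ G₁) :
    IsPMAtom (PMZS G₁) (replicate μ g + replicate 1 h) := by
  classical
  have hn2 := hn.two_le
  have hμm : μ ≤ m' := by omega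
  have hμnm : μ ≤ n - m' := by omega
  have hμ2 : 2 ≤ μ := by omega
  -- pm membership
  have hpm : IsPMZeroSum (replicate μ g + replicate 1 h) := by
    rw [pm_rep_add_rep_iff hgh]
    rcases Nat.le_total m' (n - m') with hc | hc
    · -- μ = m' : use i = 0, j = 1 : h = μ • g
      refine ⟨0, 1, by omega, le_refl 1, ?_⟩
      have hμm' : μ = m' := by omega
      simp only [Nat.sub_zero, Nat.sub_self, zero_nsmul, zero_add, add_zero, one_nsmul,
        nsmul_eq_mul]
      rw [hm, hμm']
      push_cast
      ring
    · -- μ = n - m' : use i = μ, j = 1 : μ • g + h = 0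
      refine ⟨μ, 1, le_refl μ, le_refl 1, ?_⟩
      have hμm' : μ = n - m' := by omega
      simp only [Nat.sub_self, zero_nsmul, add_zero, one_nsmul, nsmul_eq_mul]
      rw [hm, hμm']
      have : (((n - m' : ℕ) : ZMod n) + (m' : ZMod n)) * g = 0 := by
        have hcast : ((n - m' : ℕ) : ZMod n) + (m' : ZMod n) = ((n - m' + m' : ℕ) : ZMod n) := by
          push_cast; ring
        rw [hcast, Nat.sub_add_cancel (by omega), ZMod.natCast_self, zero_mul]
      linear_combination this
  refine mk_atom ?_ hpm ?_ ?_
  · intro x hx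
    rcases Multiset.mem_add.mp hx with h' | h'
    · rw [Multiset.eq_of_mem_replicate h']; exact hgG
    · rw [Multiset.eq_of_mem_replicate h']; exact hhG
  · intro hcon
    have := congrArg Multiset.card hcon
    simp at this
  · intro B C hbc hB hC
    have hmemB : ∀ x ∈ B, x = g ∨ x = h := by
      intro x hx
      have : x ∈ (replicate μ g + replicate 1 h : Multiset (ZMod n)) := by
        rw [hbc]; exact Multiset.mem_add.mpr (Or.inl hx)
      rcases Multiset.mem_add.mp this with h' | h'
      · exact Or.inl (Multiset.eq_of_mem_replicate h')
      · exact Or.inr (Multiset.eq_of_mem_replicate h')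
    have hmemC : ∀ x ∈ C, x = g ∨ x = h := by
      intro x hx
      have : x ∈ (replicate μ g + replicate 1 h : Multiset (ZMod n)) := by
        rw [hbc]; exact Multiset.mem_add.mpr (Or.inr hx)
      rcases Multiset.mem_add.mp this with h' | h'
      · exact Or.inl (Multiset.eq_of_mem_replicate h')
      · exact Or.inr (Multiset.eq_of_mem_replicate h')
    have eB := eq_rep_add_rep (Ne.symm (Ne.symm hgh)) hmemB
    have eC := eq_rep_add_rep (Ne.symm (Ne.symm hgh)) hmemC
    have hcg : B.count g + C.count g = μ := by
      have := congrArg (Multiset.count g) hbc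
      rw [Multiset.count_add, Multiset.count_add, Multiset.count_replicate,
        Multiset.count_replicate] at this
      simp [hgh, Ne.symm hgh] at this
      omega
    have hch : B.count h + C.count h = 1 := by
      have := congrArg (Multiset.count h) hbc
      rw [Multiset.count_add, Multiset.count_add, Multiset.count_replicate,
        Multiset.count_replicate] at this
      simp [hgh, Ne.symm hgh] at this
      omega
    -- the h lives in B or in C
    by_cases hBh : B.count h = 0
    · left
      have hCh : C.count h = 1 := by omega
      have hCpm : IsPMZeroSum (replicate (C.count g) g + replicate (C.count h) h) := by
        rw [← eC]; exact hC
      rw [hCh] at hCpm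
      obtain ⟨k, l, hk, hl, hdvd⟩ := pm_arith hn hg hgh hm hCpm
      have hi'μ : μ ≤ C.count g := by
        by_contra hcon2
        push_neg at hcon2
        refine mu_bound hn hm1 hm2 hμ (D := (C.count g : ℤ) - 2 * k) (c := C.count g)
          ?_ hcon2 ?_
        · rw [abs_le]
          have : (k : ℤ) ≤ (C.count g : ℤ) := by exact_mod_cast hk
          omega
        · interval_cases l
          · left; convert hdvd using 2; push_cast; ring
          · right; convert hdvd using 1; push_cast; ring
      have hBg0 : B.count g = 0 := by omega
      rw [eB, hBg0, hBh]
      simp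
    · right
      have hBh1 : B.count h = 1 := by omega
      have hBpm : IsPMZeroSum (replicate (B.count g) g + replicate (B.count h) h) := by
        rw [← eB]; exact hB
      rw [hBh1] at hBpm
      obtain ⟨k, l, hk, hl, hdvd⟩ := pm_arith hn hg hgh hm hBpm
      have hi'μ : μ ≤ B.count g := by
        by_contra hcon2
        push_neg at hcon2
        refine mu_bound hn hm1 hm2 hμ (D := (B.count g : ℤ) - 2 * k) (c := B.count g)
          ?_ hcon2 ?_
        · rw [abs_le]
          have : (k : ℤ) ≤ (B.count g : ℤ) := by exact_mod_cast hk
          omega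
        · interval_cases l
          · left; convert hdvd using 2; push_cast; ring
          · right; convert hdvd using 1; push_cast; ring
      have hCg0 : C.count g = 0 := by omega
      have hCh0 : C.count h = 0 := by omega
      rw [eC, hCg0, hCh0]
      simp

end CaseAAtoms


section CaseA

variable {n : ℕ}

lemma rep_congr {g : ZMod n} {a b : ℕ} (h : a = b) :
    (replicate a g : Multiset (ZMod n)) = replicate b g := by rw [h]

lemma one_mem_deltaM_caseA (hn : n.Prime) (hn2 : (n - 2).Prime) {G₁ : Set (ZMod n)}
    {g h : ZMod n} (hgG : g ∈ G₁) (hhG : h ∈ G₁) (hg : g ≠ 0) (hh : h ≠ 0)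
    (hhg : h ≠ g) (hhng : h ≠ -g) : 1 ∈ DeltaM (PMZS G₁) := by
  classical
  haveI : NeZero n := ⟨hn.pos.ne'⟩
  haveI := Fact.mk hn
  have hn4 : 4 ≤ n := by
    have := hn2.two_le
    have := hn.two_le
    omega
  have ho : Odd n := hn.odd_of_ne_two (by omega)
  have hn5 : 5 ≤ n := by
    rcases ho with ⟨k, hk⟩
    omega
  set m : ZMod n := h * g⁻¹ with hmdef
  set m' : ℕ := m.val with hm'def
  have hmval : ((m' : ℕ) : ZMod n) = m := ZMod.natCast_rightInverse m
  have hm : h = (m' : ZMod n) * g := by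
    rw [hmval, hmdef, mul_assoc, inv_mul_cancel₀ hg, mul_one]
  have hm'lt : m' < n := ZMod.val_lt m
  have hm'0 : m' ≠ 0 := by
    intro h0
    apply hh
    rw [hm, h0]
    simp
  have hm'1 : m' ≠ 1 := by
    intro h1
    apply hhg
    rw [hm, h1]
    simp
  have hm'n1 : m' ≠ n - 1 := by
    intro h1
    apply hhng
    rw [hm, h1]
    have : ((n - 1 : ℕ) : ZMod n) = -1 := by
      push_cast [Nat.cast_sub hn.one_le, ZMod.natCast_self]
      ring
    rw [this]
    ring
  have hm1 : 2 ≤ m' := by omega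
  have hm2 : m' ≤ n - 2 := by omega
  set μ : ℕ := min m' (n - m') with hμdef
  have hμm : μ ≤ m' := min_le_left _ _
  have hμnm : μ ≤ n - m' := min_le_right _ _
  have hμ2 : 2 ≤ μ := by omega
  have h2μ : 2 * μ ≤ n := by omega
  set w : ℕ := μ - 1 with hwdef
  set d : ℕ := n - 2 with hddef
  have hw1 : 1 ≤ w := by omega
  have hwd : w < d := by omega
  have hd1 : 1 < d := by omega
  have hcop : Nat.Coprime w d := by
    have h1 : Nat.Coprime d w := (hn2.coprime_iff_not_dvd).mpr (by
      intro hdvd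
      have := Nat.le_of_dvd (by omega) hdvd
      omega)
    exact h1.symm
  obtain ⟨u, -, hu⟩ := Nat.exists_mul_mod_eq_one_of_coprime hcop hd1
  have hu0 : u ≠ 0 := by
    rintro rfl
    rw [Nat.mul_zero, Nat.zero_mod] at hu
    omega
  set v : ℕ := w * u / d with hvdef
  have huv : d * v + 1 = w * u := by
    have := Nat.div_add_mod (w * u) d
    rw [hu] at this
    rw [hvdef]
    omega
  have hgh : g ≠ h := Ne.symm hhg
  -- the four atoms
  have hW : IsPMAtom (PMZS G₁) (replicate μ g + replicate 1 h) :=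
    atom_W hn hg hgh hm hm1 hm2 hμdef hgG hhG
  have hA2g : IsPMAtom (PMZS G₁) (replicate 2 g) := atom_rep_two hg hgG
  have hA2h : IsPMAtom (PMZS G₁) (replicate 2 h) := atom_rep_two hh hhG
  have hAng : IsPMAtom (PMZS G₁) (replicate n g) := atom_rep_n hn ho hg hgG
  -- the element X with two factorizations of consecutive lengths
  set X : Multiset (ZMod n) := replicate (2*u*μ + 2*v*n) g + replicate (2*u) h with hXdef
  set l₁ : List (Multiset (ZMod n)) :=
    List.replicate (2*u) (replicate μ g + replicate 1 h) ++
    List.replicate (v*n) (replicate 2 g) with hl₁def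
  set l₂ : List (Multiset (ZMod n)) :=
    List.replicate (u*μ) (replicate 2 g) ++ List.replicate u (replicate 2 h) ++
    List.replicate (2*v) (replicate n g) with hl₂def
  have hl₁atoms : ∀ A ∈ l₁, IsPMAtom (PMZS G₁) A := by
    intro A hA
    rcases List.mem_append.mp hA with h' | h'
    · rw [(List.mem_replicate.mp h').2]; exact hW
    · rw [(List.mem_replicate.mp h').2]; exact hA2g
  have hl₂atoms : ∀ A ∈ l₂, IsPMAtom (PMZS G₁) A := by
    intro A hA
    rcases List.mem_append.mp hA with h' | h'
    · rcases List.mem_append.mp h' with h'' | h''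
      · rw [(List.mem_replicate.mp h'').2]; exact hA2g
      · rw [(List.mem_replicate.mp h'').2]; exact hA2h
    · rw [(List.mem_replicate.mp h').2]; exact hAng
  have hl₁sum : l₁.sum = X := by
    rw [hl₁def, List.sum_append, List.sum_replicate, List.sum_replicate, smul_add,
      Multiset.nsmul_replicate, Multiset.nsmul_replicate, Multiset.nsmul_replicate]
    rw [add_right_comm, ← Multiset.replicate_add, hXdef]
    rw [rep_congr (g := g) (show 2*u*μ + v*n*2 = 2*u*μ + 2*v*n by ring),
      rep_congr (g := h) (show 2*u*1 = 2*u by ring)]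
  have hl₂sum : l₂.sum = X := by
    rw [hl₂def, List.sum_append, List.sum_append, List.sum_replicate, List.sum_replicate,
      List.sum_replicate, Multiset.nsmul_replicate, Multiset.nsmul_replicate,
      Multiset.nsmul_replicate]
    rw [add_right_comm, ← Multiset.replicate_add, hXdef]
    rw [rep_congr (g := g) (show u*μ*2 + 2*v*n = 2*u*μ + 2*v*n by ring),
      rep_congr (g := h) (show u*2 = 2*u by ring)]
  have hl₁len : l₁.length = 2*u + v*n := by
    rw [hl₁def, List.length_append, List.length_replicate, List.length_replicate]
  have hl₂len : l₂.length = u*μ + u + 2*v := by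
    rw [hl₂def, List.length_append, List.length_append, List.length_replicate,
      List.length_replicate, List.length_replicate]
  have hsucc : u*μ + u + 2*v = (2*u + v*n) + 1 := by
    have hμw : μ = w + 1 := by omega
    have hnd : n = d + 2 := by omega
    rw [hμw, hnd]
    have hZ : (d : ℤ) * v + 1 = w * u := by exact_mod_cast huv
    zify
    linear_combination -hZ
  have hXmem : X ∈ PMZS G₁ := by
    rw [← hl₁sum]
    exact AddSubmonoid.list_sum_mem _ (fun A hA => (hl₁atoms A hA).1)
  have hL1 : (2*u + v*n) ∈ LengthSet (PMZS G₁) X := ⟨l₁, hl₁atoms, hl₁sum, hl₁len⟩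
  have hL2 : (2*u + v*n) + 1 ∈ LengthSet (PMZS G₁) X :=
    ⟨l₂, hl₂atoms, hl₂sum, by rw [hl₂len, hsucc]⟩
  exact ⟨X, hXmem, one_pos, 2*u + v*n, hL1, hL2, fun b _ hb => hb⟩

end CaseA


section Assembly

variable {n : ℕ}

lemma sInf_deltaM_eq_one {S : AddSubmonoid (Multiset (ZMod n))} (h1 : 1 ∈ DeltaM S) :
    sInf (DeltaM S) = 1 := by
  have hle := Nat.sInf_le h1
  have hmem := Nat.sInf_mem (⟨1, h1⟩ : (DeltaM S).Nonempty)
  obtain ⟨X, _, hpos, _⟩ := hmem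
  omega

lemma divclosed_pmzs (G₁ : Set (ZMod n)) :
    IsDivClosed (PMZS (Set.univ : Set (ZMod n))) (PMZS G₁) := by
  constructor
  · intro X hX
    exact ⟨fun x _ => Set.mem_univ x, hX.2⟩
  · rintro s hs a ha ⟨c, hc, hsca⟩
    refine ⟨?_, ha.2⟩
    intro x hx
    exact hs.1 x (by rw [hsca]; exact Multiset.mem_add.mpr (Or.inl hx))

lemma divclosed_self : IsDivClosed (PMZS (Set.univ : Set (ZMod n)))
    (PMZS (Set.univ : Set (ZMod n))) :=
  ⟨le_refl _, fun _ _ a ha _ => ha⟩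

lemma one_zmod_ne_zero (hn5 : 5 ≤ n) : (1 : ZMod n) ≠ 0 := by
  haveI : Fact (1 < n) := ⟨by omega⟩
  exact one_ne_zero

lemma nminus2_mem_deltaM (hn : n.Prime) (hn2 : (n - 2).Prime) :
    (n - 2) ∈ DeltaM (PMZS ({(1 : ZMod n)} : Set (ZMod n))) := by
  have hn4 : 4 ≤ n := by
    have := hn2.two_le
    have := hn.two_le
    omega
  have ho : Odd n := hn.odd_of_ne_two (by omega)
  have hn5 : 5 ≤ n := by rcases ho with ⟨k, hk⟩; omega
  have hone : (1 : ZMod n) ≠ 0 := one_zmod_ne_zero hn5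
  have honeG : (1 : ZMod n) ∈ ({(1 : ZMod n)} : Set (ZMod n)) := rfl
  have hG : ({(1 : ZMod n)} : Set (ZMod n)) ⊆ {0, 1, -1} := by
    intro x hx
    rw [Set.mem_singleton_iff.mp hx]
    right; left; rfl
  set X : Multiset (ZMod n) := replicate (2 * n) (1 : ZMod n) with hXdef
  have hAn : IsPMAtom (PMZS ({(1 : ZMod n)} : Set (ZMod n))) (replicate n (1 : ZMod n)) :=
    atom_rep_n hn ho hone honeG
  have hA2 : IsPMAtom (PMZS ({(1 : ZMod n)} : Set (ZMod n))) (replicate 2 (1 : ZMod n)) :=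
    atom_rep_two hone honeG
  have hL2 : 2 ∈ LengthSet (PMZS ({(1 : ZMod n)} : Set (ZMod n))) X := by
    refine ⟨List.replicate 2 (replicate n (1 : ZMod n)), ?_, ?_, by simp⟩
    · intro A hA
      rw [(List.mem_replicate.mp hA).2]; exact hAn
    · rw [List.sum_replicate, Multiset.nsmul_replicate, hXdef]
  have hLn : n ∈ LengthSet (PMZS ({(1 : ZMod n)} : Set (ZMod n))) X := by
    refine ⟨List.replicate n (replicate 2 (1 : ZMod n)), ?_, ?_, by simp⟩
    · intro A hA
      rw [(List.mem_replicate.mp hA).2]; exact hA2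
    · rw [List.sum_replicate, Multiset.nsmul_replicate, hXdef]
      exact rep_congr (by ring)
  have hXmem : X ∈ PMZS ({(1 : ZMod n)} : Set (ZMod n)) := by
    obtain ⟨l, hl, hsum, _⟩ := hL2
    rw [← hsum]
    exact AddSubmonoid.list_sum_mem _ (fun A hA => (hl A hA).1)
  refine ⟨X, hXmem, by omega, 2, hL2, ?_, ?_⟩
  · have : 2 + (n - 2) = n := by omega
    rw [this]
    exact hLn
  · intro b hb h2b
    have := (gap_lemma hn ho hone hG hL2 hb h2b).1
    omega

lemma sInf_deltaM_caseB (hn : n.Prime) (ho : Odd n) {g : ZMod n} (hg : g ≠ 0)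
    {G₁ : Set (ZMod n)} (hG : G₁ ⊆ {0, g, -g}) (hne : (DeltaM (PMZS G₁)).Nonempty) :
    sInf (DeltaM (PMZS G₁)) = n - 2 := by
  have := Nat.sInf_mem hne
  have h := deltaM_subset_caseB hn ho hg hG this
  exact h

end Assembly


/-- If `n` and `n - 2` are both prime, then for `H = B±(C_n)` one has `Δ*(H) = {1, n - 2}`. -/
theorem stmt_8 (n : ℕ) (hn : n.Prime) (hn2 : (n - 2).Prime) :
    DeltaStar (PMZS (Set.univ : Set (ZMod n))) = {1, n - 2} := by
  classical
  have hn4 : 4 ≤ n := by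
    have := hn2.two_le
    have := hn.two_le
    omega
  have ho : Odd n := hn.odd_of_ne_two (by omega)
  have hn5 : 5 ≤ n := by rcases ho with ⟨k, hk⟩; omega
  have hone : (1 : ZMod n) ≠ 0 := one_zmod_ne_zero hn5
  have htwo : (2 : ZMod n) ≠ 0 := two_ne_zero_zmod hn ho
  have h21 : (2 : ZMod n) ≠ 1 := by
    intro hq
    apply hone
    linear_combination hq
  have h2n1 : (2 : ZMod n) ≠ -1 := by
    intro hq
    have h3 : ((3 : ℕ) : ZMod n) = 0 := by push_cast; linear_combination hq
    have hdvd := (ZMod.natCast_eq_zero_iff 3 n).mp h3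
    have := Nat.le_of_dvd (by norm_num) hdvd
    omega
  have hG1sub : ({(1 : ZMod n)} : Set (ZMod n)) ⊆ {0, 1, -1} := by
    intro x hx
    rw [Set.mem_singleton_iff.mp hx]
    right; left; rfl
  ext dd
  simp only [Set.mem_insert_iff, Set.mem_singleton_iff]
  constructor
  · rintro ⟨S, hdc, hne, rfl⟩
    rw [divclosed_eq S hdc] at hne ⊢
    set G₁ : Set (ZMod n) := {g : ZMod n | ∃ s ∈ S, g ∈ s} with hG₁def
    by_cases hpair : ∃ g ∈ G₁, ∃ h' ∈ G₁, g ≠ 0 ∧ h' ≠ 0 ∧ h' ≠ g ∧ h' ≠ -g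
    · left
      obtain ⟨g, hgG, h', hhG, hg, hh, hhg, hhng⟩ := hpair
      exact sInf_deltaM_eq_one (one_mem_deltaM_caseA hn hn2 hgG hhG hg hh hhg hhng)
    · right
      push_neg at hpair
      by_cases hz : ∃ g ∈ G₁, g ≠ 0
      · obtain ⟨g, hgG, hg⟩ := hz
        refine sInf_deltaM_caseB hn ho hg ?_ hne
        intro y hy
        by_cases hy0 : y = 0
        · rw [hy0]; exact Set.mem_insert 0 _
        by_cases hyg : y = g
        · rw [hyg]; right; left; rfl
        by_cases hyng : y = -g
        · rw [hyng]; right; right; rfl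
        exact absurd (hpair g hgG y hy hg hy0 hyg) hyng
      · push_neg at hz
        refine sInf_deltaM_caseB hn ho hone (g := (1 : ZMod n)) ?_ hne
        intro y hy
        rw [hz y hy]
        exact Set.mem_insert 0 _
  · rintro (rfl | rfl)
    · have h1 : 1 ∈ DeltaM (PMZS (Set.univ : Set (ZMod n))) :=
        one_mem_deltaM_caseA hn hn2 (Set.mem_univ (1 : ZMod n)) (Set.mem_univ (2 : ZMod n))
          hone htwo h21 h2n1
      exact ⟨_, divclosed_self, ⟨1, h1⟩, (sInf_deltaM_eq_one h1).symm⟩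
    · have hd := nminus2_mem_deltaM hn hn2
      exact ⟨PMZS ({(1 : ZMod n)} : Set (ZMod n)), divclosed_pmzs _, ⟨n - 2, hd⟩,
        (sInf_deltaM_caseB hn ho hone hG1sub ⟨n - 2, hd⟩).symm⟩
end

section
/- Let G be a finite abelian group and let e₁, …, e_r be independent elements of even order, say ord(e_i) = 2m_i, with m₁ + … + m_r ≥ 2. Let e₀ = m₁e₁ + … + m_r e_r, set G₀ = {e₀, e₁, …, e_r} and H = B±(G₀). Then Δ(H) = {m₁ + … + m_r − 1}. -/
open Multiset

variable {G : Type*} [AddCommGroup G]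

open Finset

namespace Stmt13

variable {G : Type*} [AddCommGroup G] {r : ℕ}

def E0 (e : Fin r → G) (m : Fin r → ℕ) : G := ∑ i, m i • e i

def repM (e : Fin r → G) (m : Fin r → ℕ) (a : ℕ) (b : Fin r → ℕ) : Multiset G :=
  a • ({E0 e m} : Multiset G) + ∑ i, b i • ({e i} : Multiset G)

section Basics

variable [Finite G] {e : Fin r → G} {m : Fin r → ℕ}

lemma hm_pos (hord : ∀ i, addOrderOf (e i) = 2 * m i) : ∀ i, 1 ≤ m i := by
  intro i
  have := addOrderOf_pos (e i)
  rw [hord i] at this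
  omega

omit [Finite G] in
lemma hdvd (he : IsIndepFamily e) (hord : ∀ i, addOrderOf (e i) = 2 * m i) :
    ∀ c : Fin r → ℤ, ∑ i, c i • e i = 0 → ∀ i, (2 * (m i : ℤ)) ∣ c i := by
  intro c h i
  have h2 := he c h i
  have h3 : ((addOrderOf (e i) : ℕ) : ℤ) ∣ c i := addOrderOf_dvd_iff_zsmul_eq_zero.2 h2
  rw [hord i] at h3
  exact_mod_cast h3

lemma hinj (he : IsIndepFamily e) (hord : ∀ i, addOrderOf (e i) = 2 * m i) :
    Function.Injective e := by
  intro i j hij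
  by_contra hne
  have hm := hm_pos hord
  set c : Fin r → ℤ := fun k => (if k = i then 1 else 0) - (if k = j then 1 else 0) with hc
  have hsum0 : ∑ k, c k • e k = 0 := by
    simp only [hc, sub_smul, ite_smul, one_smul, zero_smul, Finset.sum_sub_distrib,
      Finset.sum_ite_eq', Finset.mem_univ, if_true, hij, sub_self]
  have hd := hdvd he hord c hsum0 i
  simp only [hc, if_pos rfl, if_neg hne, sub_zero] at hd
  have h0 : (1 : ℤ) = 0 := Int.eq_zero_of_abs_lt_dvd hd (by
    have := hm i; rw [abs_one]; push_cast; omega)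
  norm_num at h0

omit [Finite G] in
lemma e0_zsmul (x : ℤ) : x • E0 e m = ∑ i, (x * m i) • e i := by
  rw [E0, Finset.smul_sum]
  refine Finset.sum_congr rfl fun i _ => ?_
  rw [← natCast_zsmul (e i) (m i), smul_smul]

omit [Finite G] in
lemma e0_nsmul_cast : ∑ k, ((m k : ℤ)) • e k = E0 e m := by
  rw [E0]; exact Finset.sum_congr rfl fun i _ => natCast_zsmul (e i) (m i)

lemma hne0 (he : IsIndepFamily e) (hord : ∀ i, addOrderOf (e i) = 2 * m i)
    (hsum : 2 ≤ ∑ i, m i) : ∀ j, E0 e m ≠ e j := by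
  intro j habs
  have hm := hm_pos hord
  set c : Fin r → ℤ := fun k => (m k : ℤ) - (if k = j then 1 else 0) with hc
  have hsum0 : ∑ k, c k • e k = 0 := by
    simp only [hc, sub_smul, ite_smul, one_smul, zero_smul, Finset.sum_sub_distrib,
      Finset.sum_ite_eq', Finset.mem_univ, if_true]
    rw [e0_nsmul_cast, habs, sub_self]
  have hdv := hdvd he hord c hsum0
  have hkj : ∀ k, k = j := by
    intro k
    by_contra hk
    have hd := hdv k
    simp only [hc, if_neg hk, sub_zero] at hd
    have h0 : ((m k : ℤ)) = 0 := Int.eq_zero_of_abs_lt_dvd hd (by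
      have := hm k
      rw [abs_of_nonneg (by positivity)]; push_cast; omega)
    have := hm k
    omega
  have hj := hdv j
  simp only [hc, if_pos rfl] at hj
  have h0 : ((m j : ℤ)) - 1 = 0 := Int.eq_zero_of_abs_lt_dvd hj (by
    have := hm j
    rw [abs_of_nonneg (by push_cast; omega)]; push_cast; omega)
  have hmj : m j = 1 := by omega
  have hsj : ∑ i, m i = m j := by
    apply Finset.sum_eq_single_of_mem j (Finset.mem_univ j)
    intro k _ hk
    exact absurd (hkj k) hk
  omega

lemma e0_ne_zero (he : IsIndepFamily e) (hord : ∀ i, addOrderOf (e i) = 2 * m i)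
    (hsum : 2 ≤ ∑ i, m i) : E0 e m ≠ 0 := by
  intro habs
  have hm := hm_pos hord
  have hr : 0 < r := by
    by_contra h
    have : r = 0 := by omega
    subst this
    simp at hsum
  have hsum0 : ∑ k, ((m k : ℤ)) • e k = 0 := by rw [e0_nsmul_cast, habs]
  have hd := hdvd he hord _ hsum0 ⟨0, hr⟩
  have h0 : ((m ⟨0, hr⟩ : ℤ)) = 0 := Int.eq_zero_of_abs_lt_dvd hd (by
    have := hm ⟨0, hr⟩
    rw [abs_of_nonneg (by positivity)]; push_cast; omega)
  have := hm ⟨0, hr⟩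
  omega

end Basics

end Stmt13

namespace Stmt13

section RepM

variable {G : Type*} [AddCommGroup G] [DecidableEq G] {r : ℕ} {e : Fin r → G} {m : Fin r → ℕ}

def SG0 (e : Fin r → G) (m : Fin r → ℕ) : Set G := insert (E0 e m) (Set.range e)

lemma count_repM_e0 (hne : ∀ j, E0 e m ≠ e j) (a : ℕ) (b : Fin r → ℕ) :
    count (E0 e m) (repM e m a b) = a := by
  rw [repM, count_add, count_nsmul, count_singleton, if_pos rfl, Multiset.count_sum']
  have : ∀ i ∈ Finset.univ, count (E0 e m) (b i • ({e i} : Multiset G)) = 0 := by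
    intro i _
    rw [count_nsmul, count_singleton, if_neg (hne i), mul_zero]
  rw [Finset.sum_congr rfl this]
  simp

lemma count_repM_e (hne : ∀ j, E0 e m ≠ e j) (hinj : Function.Injective e)
    (a : ℕ) (b : Fin r → ℕ) (j : Fin r) :
    count (e j) (repM e m a b) = b j := by
  rw [repM, count_add, count_nsmul, count_singleton, if_neg (fun h => hne j h.symm),
    Multiset.count_sum']
  have : ∀ i ∈ Finset.univ, count (e j) (b i • ({e i} : Multiset G))
      = if i = j then b j else 0 := by
    intro i _
    rw [count_nsmul, count_singleton]
    by_cases h : i = j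
    · subst h; simp
    · rw [if_neg (fun hh => h (hinj hh).symm), if_neg h, mul_zero]
  rw [Finset.sum_congr rfl this, Finset.sum_ite_eq', if_pos (Finset.mem_univ j)]
  simp

lemma count_repM_notin (a : ℕ) (b : Fin r → ℕ) {g : G} (hg : g ∉ SG0 e m) :
    count g (repM e m a b) = 0 := by
  have h1 : g ≠ E0 e m := fun h => hg (by rw [h]; exact Set.mem_insert _ _)
  have h2 : ∀ i, g ≠ e i := fun i h => hg (by rw [h]; exact Set.mem_insert_of_mem _ ⟨i, rfl⟩)
  rw [repM, count_add, count_nsmul, count_singleton, if_neg h1, Multiset.count_sum']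
  have : ∀ i ∈ Finset.univ, count g (b i • ({e i} : Multiset G)) = 0 := by
    intro i _
    rw [count_nsmul, count_singleton, if_neg (h2 i), mul_zero]
  rw [Finset.sum_congr rfl this]
  simp

lemma repM_supp (a : ℕ) (b : Fin r → ℕ) : ∀ g ∈ repM e m a b, g ∈ SG0 e m := by
  intro g hg
  rw [repM, Multiset.mem_add] at hg
  rcases hg with hg | hg
  · rw [nsmul_singleton] at hg
    rw [(Multiset.mem_replicate.1 hg).2]
    exact Set.mem_insert _ _
  · rcases Multiset.mem_sum.1 hg with ⟨i, _, hi⟩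
    rw [nsmul_singleton] at hi
    rw [(Multiset.mem_replicate.1 hi).2]
    exact Set.mem_insert_of_mem _ ⟨i, rfl⟩

lemma repM_eq (hne : ∀ j, E0 e m ≠ e j) (hinj : Function.Injective e)
    {S : Multiset G} (hS : ∀ g ∈ S, g ∈ SG0 e m) :
    S = repM e m (count (E0 e m) S) (fun i => count (e i) S) := by
  ext g
  by_cases h0 : g = E0 e m
  · subst h0; rw [count_repM_e0 hne]
  · by_cases h1 : ∃ i, g = e i
    · rcases h1 with ⟨i, rfl⟩
      rw [count_repM_e hne hinj]
    · have hg : g ∉ SG0 e m := by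
        intro h
        rcases h with h | h
        · exact h0 h
        · rcases h with ⟨i, rfl⟩; exact h1 ⟨i, rfl⟩
      rw [count_repM_notin _ _ hg, Multiset.count_eq_zero]
      exact fun hmem => hg (hS g hmem)

lemma repM_add (a a' : ℕ) (b b' : Fin r → ℕ) :
    repM e m a b + repM e m a' b' = repM e m (a + a') (fun i => b i + b' i) := by
  have h : ∑ i, (b i + b' i) • ({e i} : Multiset G)
      = ∑ i, b i • ({e i} : Multiset G) + ∑ i, b' i • ({e i} : Multiset G) := by
    rw [← Finset.sum_add_distrib]
    exact Finset.sum_congr rfl fun i _ => add_nsmul _ _ _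
  rw [repM, repM, repM, add_nsmul, h]
  abel

lemma repM_zero : repM e m 0 (fun _ => 0) = 0 := by
  simp [repM]

lemma repM_congr {a a' : ℕ} {b b' : Fin r → ℕ} (ha : a = a') (hb : ∀ i, b i = b' i) :
    repM e m a b = repM e m a' b' := by
  subst ha
  rw [show b = b' from funext hb]

lemma repM_eq_zero_iff (hne : ∀ j, E0 e m ≠ e j) (hinj : Function.Injective e)
    {a : ℕ} {b : Fin r → ℕ} : repM e m a b = 0 ↔ a = 0 ∧ ∀ i, b i = 0 := by
  constructor
  · intro h
    constructor
    · rw [← count_repM_e0 hne a b, h]; simp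
    · intro i
      rw [← count_repM_e hne hinj a b i, h]; simp
  · rintro ⟨rfl, hb⟩
    rw [repM_congr rfl hb, repM_zero]

lemma sum_repM (a : ℕ) (b : Fin r → ℕ) :
    (repM e m a b).sum = a • E0 e m + ∑ i, b i • e i := by
  rw [repM, Multiset.sum_add, nsmul_singleton, Multiset.sum_replicate]
  congr 1
  induction (Finset.univ : Finset (Fin r)) using Finset.induction with
  | empty => simp
  | @insert x s h ih => rw [Finset.sum_insert h, Finset.sum_insert h, Multiset.sum_add, ih,
      nsmul_singleton, Multiset.sum_replicate]

end RepM

end Stmt13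

namespace Stmt13

/-- The condition characterizing membership in `B±(G₀)` in terms of multiplicities. -/
def Cond (m : Fin r → ℕ) (a : ℕ) (b : Fin r → ℕ) : Prop :=
  (a % 2 = 0 ∧ ∀ i, b i % 2 = 0) ∨ (a % 2 = 1 ∧ ∀ i, m i ≤ b i ∧ b i % 2 = m i % 2)

section IntHelper

lemma int_helper {mi a1 a2 b1 b2 : ℤ} (hmi : 1 ≤ mi)
    (hd : 2 * mi ∣ (a1 - a2) * mi + (b1 - b2)) (hb1 : 0 ≤ b1) (hb2 : 0 ≤ b2) :
    ((a1 + a2) % 2 = 0 → (b1 + b2) % 2 = 0) ∧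
    ((a1 + a2) % 2 ≠ 0 → mi ≤ b1 + b2 ∧ (b1 + b2) % 2 = mi % 2) := by
  rcases hd with ⟨k, hk⟩
  have hq : b1 - b2 = mi * (2 * k - (a1 - a2)) := by ring_nf; linarith [hk]
  set q : ℤ := 2 * k - (a1 - a2) with hqdef
  constructor
  · intro hpar
    -- a1 - a2 even, so q even, so b1 - b2 = mi * q even
    have hqe : q % 2 = 0 := by omega
    obtain ⟨j, hj⟩ : (2:ℤ) ∣ q := by omega
    have : b1 - b2 = 2 * (mi * j) := by rw [hq, hj]; ring
    omega
  · intro hpar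
    have hqo : q % 2 = 1 := by omega
    obtain ⟨j, hj⟩ : ∃ j, q = 2 * j + 1 := ⟨(q-1)/2, by omega⟩
    have hbm : b1 - b2 = 2 * (mi * j) + mi := by rw [hq, hj]; ring
    constructor
    · -- |b1 - b2| ≥ mi
      rcases le_or_gt 0 j with h | h
      · have : 0 ≤ mi * j := mul_nonneg (by omega) h
        omega
      · have hj1 : j ≤ -1 := by omega
        have : mi * j ≤ mi * (-1) := mul_le_mul_of_nonneg_left hj1 (by omega)
        omega
    · omega

end IntHelper

section MemIff

variable {G : Type*} [AddCommGroup G] [DecidableEq G] [Finite G]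
  {r : ℕ} {e : Fin r → G} {m : Fin r → ℕ}

lemma sum_eq_zero_int (he : IsIndepFamily e) (hord : ∀ i, addOrderOf (e i) = 2 * m i)
    {a1 a2 : ℕ} {b1 b2 : Fin r → ℕ}
    (h : (repM e m a1 b1).sum = (repM e m a2 b2).sum) :
    ∀ i, (2 * (m i : ℤ)) ∣ ((a1 : ℤ) - a2) * m i + ((b1 i : ℤ) - b2 i) := by
  set c : Fin r → ℤ := fun i => ((a1 : ℤ) - a2) * m i + ((b1 i : ℤ) - b2 i) with hc
  have hkey : ∑ i, c i • e i = 0 := by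
    have h1 : (repM e m a1 b1).sum - (repM e m a2 b2).sum = 0 := by rw [h, sub_self]
    rw [sum_repM, sum_repM] at h1
    have e1 : ∀ (a : ℕ) (b : Fin r → ℕ),
        (a • E0 e m + ∑ i, b i • e i) = ((a:ℤ) • E0 e m + ∑ i, (b i : ℤ) • e i) := by
      intro a b
      rw [natCast_zsmul]
      congr 1
      exact Finset.sum_congr rfl fun i _ => (natCast_zsmul _ _).symm
    rw [e1, e1] at h1
    calc ∑ i, c i • e i
        = ∑ i, ((((a1:ℤ) - a2) * m i) • e i + ((b1 i : ℤ) - b2 i) • e i) := by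
          exact Finset.sum_congr rfl fun i _ => by rw [hc, add_smul]
      _ = ((a1:ℤ) - a2) • E0 e m + ∑ i, ((b1 i : ℤ) - b2 i) • e i := by
          rw [Finset.sum_add_distrib, e0_zsmul]
      _ = ((a1:ℤ) • E0 e m + ∑ i, (b1 i:ℤ) • e i) - ((a2:ℤ) • E0 e m + ∑ i, (b2 i:ℤ) • e i) := by
          have hsplit : ∑ i, ((b1 i:ℤ) - b2 i) • e i
              = ∑ i, (b1 i:ℤ) • e i - ∑ i, (b2 i:ℤ) • e i := by
            rw [← Finset.sum_sub_distrib]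
            exact Finset.sum_congr rfl fun i _ => sub_smul _ _ _
          rw [hsplit, sub_smul]
          abel
      _ = 0 := h1
  exact fun i => hdvd he hord c hkey i

lemma mem_PMZS_iff (he : IsIndepFamily e) (hord : ∀ i, addOrderOf (e i) = 2 * m i)
    (hsum : 2 ≤ ∑ i, m i) (S : Multiset G) :
    S ∈ PMZS (SG0 e m) ↔ (∀ g ∈ S, g ∈ SG0 e m) ∧
      Cond m (count (E0 e m) S) (fun i => count (e i) S) := by
  have hne := hne0 he hord hsum
  have hinje := hinj he hord
  have hm := hm_pos hord
  constructor
  · rintro ⟨hsupp, S₁, S₂, rfl, hs⟩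
    refine ⟨hsupp, ?_⟩
    have hsupp1 : ∀ g ∈ S₁, g ∈ SG0 e m := fun g hg => hsupp g (Multiset.mem_add.2 (Or.inl hg))
    have hsupp2 : ∀ g ∈ S₂, g ∈ SG0 e m := fun g hg => hsupp g (Multiset.mem_add.2 (Or.inr hg))
    set a1 := count (E0 e m) S₁
    set a2 := count (E0 e m) S₂
    set b1 : Fin r → ℕ := fun i => count (e i) S₁
    set b2 : Fin r → ℕ := fun i => count (e i) S₂
    have h1 := repM_eq hne hinje hsupp1
    have h2 := repM_eq hne hinje hsupp2
    have hs' : (repM e m a1 b1).sum = (repM e m a2 b2).sum := by rw [← h1, ← h2]; exact hs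
    have hdvds := sum_eq_zero_int he hord hs'
    have hca : count (E0 e m) (S₁ + S₂) = a1 + a2 := count_add _ _ _
    have hcb : ∀ i, count (e i) (S₁ + S₂) = b1 i + b2 i := fun i => count_add _ _ _
    rw [hca]
    have key : ∀ i, ((a1 + a2) % 2 = 0 → (b1 i + b2 i) % 2 = 0) ∧
        ((a1 + a2) % 2 ≠ 0 → m i ≤ b1 i + b2 i ∧ (b1 i + b2 i) % 2 = m i % 2) := by
      intro i
      have := int_helper (mi := (m i : ℤ)) (by exact_mod_cast hm i) (hdvds i)
        (by positivity) (by positivity)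
      constructor
      · intro hp
        have h0 : ((a1:ℤ) + a2) % 2 = 0 := by omega
        have := this.1 h0
        omega
      · intro hp
        have h0 : ((a1:ℤ) + a2) % 2 ≠ 0 := by omega
        have := this.2 h0
        constructor
        · exact_mod_cast this.1
        · omega
    rcases Nat.mod_two_eq_zero_or_one (a1 + a2) with hp | hp
    · left
      refine ⟨hp, fun i => ?_⟩
      show count (e i) (S₁ + S₂) % 2 = 0
      rw [hcb i]
      exact (key i).1 hp
    · right
      refine ⟨hp, fun i => ?_⟩
      show m i ≤ count (e i) (S₁ + S₂) ∧ count (e i) (S₁ + S₂) % 2 = m i % 2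
      rw [hcb i]
      exact (key i).2 (by omega)
  · rintro ⟨hsupp, hcond⟩
    refine ⟨hsupp, ?_⟩
    set a := count (E0 e m) S with hadef
    set b : Fin r → ℕ := fun i => count (e i) S with hbdef
    have hrep : S = repM e m a b := repM_eq hne hinje hsupp
    rcases hcond with ⟨hae, hbe⟩ | ⟨hao, hbo⟩
    · refine ⟨repM e m (a/2) (fun i => b i / 2), repM e m (a/2) (fun i => b i / 2), ?_, rfl⟩
      rw [hrep, repM_add]
      exact repM_congr (by omega) (fun i => by have := hbe i; omega)
    · refine ⟨repM e m ((a+1)/2) (fun i => (b i - m i)/2),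
        repM e m (a/2) (fun i => (b i + m i)/2), ?_, ?_⟩
      · rw [hrep, repM_add]
        exact repM_congr (by omega) (fun i => by have := hbo i; omega)
      · rw [sum_repM, sum_repM]
        have h1 : (a+1)/2 = a/2 + 1 := by omega
        have h3 : ∑ i, ((b i + m i)/2) • e i
            = ∑ i, ((b i - m i)/2) • e i + E0 e m := by
          rw [E0, ← Finset.sum_add_distrib]
          refine Finset.sum_congr rfl fun i _ => ?_
          rw [← add_nsmul]
          congr 1
          have := hbo i
          omega
        rw [h1, h3, add_nsmul, one_nsmul]
        abel

end MemIff

end Stmt13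

namespace Stmt13

section Atoms

variable {G : Type*} [AddCommGroup G] [DecidableEq G] [Finite G]
  {r : ℕ} {e : Fin r → G} {m : Fin r → ℕ}

/-- The atom e₀². -/
def VA (e : Fin r → G) (m : Fin r → ℕ) : Multiset G := repM e m 2 (fun _ => 0)

/-- The atom eⱼ². -/
def UA (e : Fin r → G) (m : Fin r → ℕ) (j : Fin r) : Multiset G :=
  repM e m 0 (fun i => if i = j then 2 else 0)

/-- The atom e₀·∏ eᵢ^{mᵢ}. -/
def WA (e : Fin r → G) (m : Fin r → ℕ) : Multiset G := repM e m 1 m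

variable (he : IsIndepFamily e) (hord : ∀ i, addOrderOf (e i) = 2 * m i)
  (hsum : 2 ≤ ∑ i, m i)

include he hord hsum

lemma repM_mem_iff (a : ℕ) (b : Fin r → ℕ) :
    repM e m a b ∈ PMZS (SG0 e m) ↔ Cond m a b := by
  have hne := hne0 he hord hsum
  have hinje := hinj he hord
  rw [mem_PMZS_iff he hord hsum]
  have h1 : count (E0 e m) (repM e m a b) = a := count_repM_e0 hne a b
  have h2 : (fun i => count (e i) (repM e m a b)) = b :=
    funext fun i => count_repM_e hne hinje a b i
  rw [h1, h2]
  exact ⟨fun h => h.2, fun h => ⟨repM_supp a b, h⟩⟩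

lemma VA_mem : VA e m ∈ PMZS (SG0 e m) :=
  (repM_mem_iff he hord hsum _ _).2 (Or.inl ⟨rfl, fun _ => rfl⟩)

lemma UA_mem (j : Fin r) : UA e m j ∈ PMZS (SG0 e m) :=
  (repM_mem_iff he hord hsum _ _).2 (Or.inl ⟨rfl, fun i => by
    show (if i = j then 2 else 0) % 2 = 0
    split_ifs <;> rfl⟩)

lemma WA_mem : WA e m ∈ PMZS (SG0 e m) :=
  (repM_mem_iff he hord hsum _ _).2 (Or.inr ⟨rfl, fun i => ⟨le_refl _, rfl⟩⟩)

lemma atom_iff (A : Multiset G) :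
    IsPMAtom (PMZS (SG0 e m)) A ↔ A = VA e m ∨ (∃ j, A = UA e m j) ∨ A = WA e m := by
  have hne := hne0 he hord hsum
  have hinje := hinj he hord
  have hm := hm_pos hord
  have hr : 0 < r := by
    by_contra h
    have : r = 0 := by omega
    subst this
    simp at hsum
  have hzero : ∀ (a : ℕ) (b : Fin r → ℕ), a = 0 → (∀ i, b i = 0) → repM e m a b = 0 := by
    rintro a b rfl hb
    exact (repM_eq_zero_iff hne hinje).2 ⟨rfl, hb⟩
  constructor
  · rintro ⟨hA, hA0, hmin⟩
    have hsupp := ((mem_PMZS_iff he hord hsum A).1 hA).1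
    have hrep := repM_eq hne hinje hsupp
    set a := count (E0 e m) A with hadef
    set b : Fin r → ℕ := fun i => count (e i) A with hbdef
    have hcond : Cond m a b := by
      rw [hrep] at hA
      exact (repM_mem_iff he hord hsum a b).1 hA
    rcases hcond with ⟨hae, hbe⟩ | ⟨hao, hbo⟩
    · -- even case: A must be VA or UA j
      by_cases ha2 : 2 ≤ a
      · -- A = VA + rest
        have hsplit : A = VA e m + repM e m (a - 2) b := by
          rw [hrep, VA, repM_add]
          refine repM_congr (by omega) (fun i => ?_)
          show b i = 0 + b i
          omega
        have hrest : repM e m (a-2) b ∈ PMZS (SG0 e m) :=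
          (repM_mem_iff he hord hsum _ _).2 (Or.inl ⟨by omega, hbe⟩)
        rcases hmin _ _ (VA_mem he hord hsum) hrest hsplit with h | h
        · exfalso
          have := (repM_eq_zero_iff hne hinje).1 h
          omega
        · have h2 := (repM_eq_zero_iff hne hinje).1 h
          left
          rw [hrep]
          exact repM_congr (by omega) (fun i => h2.2 i)
      · -- a = 0 (since a even)
        have ha0 : a = 0 := by omega
        have hbj : ∃ j, b j ≠ 0 := by
          by_contra h
          push_neg at h
          exact hA0 (by rw [hrep]; exact hzero a b ha0 h)
        rcases hbj with ⟨j, hbj⟩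
        have hbj2 : 2 ≤ b j := by have := hbe j; omega
        have hsplit : A = UA e m j + repM e m 0 (fun i => if i = j then b j - 2 else b i) := by
          rw [hrep, UA, repM_add]
          refine repM_congr (by omega) (fun i => ?_)
          show b i = (if i = j then 2 else 0) + (if i = j then b j - 2 else b i)
          by_cases h : i = j
          · rw [if_pos h, if_pos h, h]; omega
          · rw [if_neg h, if_neg h]; omega
        have hrest : repM e m 0 (fun i => if i = j then b j - 2 else b i) ∈ PMZS (SG0 e m) :=
          (repM_mem_iff he hord hsum _ _).2 (Or.inl ⟨rfl, fun i => by
            show (if i = j then b j - 2 else b i) % 2 = 0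
            by_cases h : i = j
            · rw [if_pos h]; have := hbe j; omega
            · rw [if_neg h]; exact hbe i⟩)
        rcases hmin _ _ (UA_mem he hord hsum j) hrest hsplit with h | h
        · exfalso
          have h2 := ((repM_eq_zero_iff hne hinje).1 h).2 j
          simp at h2
        · have h2 := (repM_eq_zero_iff hne hinje).1 h
          right; left
          refine ⟨j, ?_⟩
          rw [hrep, UA]
          refine repM_congr (by omega) (fun i => ?_)
          show b i = (if i = j then 2 else 0)
          have h3 := h2.2 i
          by_cases h4 : i = j
          · rw [if_pos h4] at h3 ⊢; rw [h4]; omega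
          · rw [if_neg h4] at h3 ⊢; omega
    · -- odd case: A must be WA
      by_cases ha3 : 3 ≤ a
      · exfalso
        have hsplit : A = VA e m + repM e m (a - 2) b := by
          rw [hrep, VA, repM_add]
          refine repM_congr (by omega) (fun i => ?_)
          show b i = 0 + b i
          omega
        have hrest : repM e m (a-2) b ∈ PMZS (SG0 e m) :=
          (repM_mem_iff he hord hsum _ _).2 (Or.inr ⟨by omega, hbo⟩)
        rcases hmin _ _ (VA_mem he hord hsum) hrest hsplit with h | h
        · have := (repM_eq_zero_iff hne hinje).1 h
          omega
        · have := ((repM_eq_zero_iff hne hinje).1 h).1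
          omega
      · have ha1 : a = 1 := by omega
        -- if some b j > m j, split off UA j
        by_cases hbig : ∃ j, m j < b j
        · exfalso
          rcases hbig with ⟨j, hbig⟩
          have hbj2 : m j + 2 ≤ b j := by have := (hbo j).2; omega
          have hsplit : A = UA e m j + repM e m 1 (fun i => if i = j then b j - 2 else b i) := by
            rw [hrep, UA, repM_add]
            refine repM_congr (by omega) (fun i => ?_)
            show b i = (if i = j then 2 else 0) + (if i = j then b j - 2 else b i)
            by_cases h : i = j
            · rw [if_pos h, if_pos h, h]; omega
            · rw [if_neg h, if_neg h]; omega
          have hrest : repM e m 1 (fun i => if i = j then b j - 2 else b i) ∈ PMZS (SG0 e m) :=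
            (repM_mem_iff he hord hsum _ _).2 (Or.inr ⟨rfl, fun i => by
              show m i ≤ (if i = j then b j - 2 else b i) ∧
                (if i = j then b j - 2 else b i) % 2 = m i % 2
              by_cases h : i = j
              · rw [if_pos h, h]
                have h5 := (hbo j).2
                exact ⟨by omega, by omega⟩
              · rw [if_neg h]; exact hbo i⟩)
          rcases hmin _ _ (UA_mem he hord hsum j) hrest hsplit with h | h
          · have h2 := ((repM_eq_zero_iff hne hinje).1 h).2 j
            simp at h2
          · have := ((repM_eq_zero_iff hne hinje).1 h).1
            omega
        · push_neg at hbig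
          right; right
          rw [hrep, WA]
          exact repM_congr ha1 (fun i => by have h1 := (hbo i).1; have h2 := hbig i; omega)
  · -- backward: each of VA, UA j, WA is an atom
    intro h
    have hVne : VA e m ≠ 0 := fun h => by
      have := ((repM_eq_zero_iff hne hinje).1 h).1; omega
    rcases h with rfl | ⟨j, rfl⟩ | rfl
    · refine ⟨VA_mem he hord hsum, hVne, ?_⟩
      intro B C hB hC hBC
      have hsuppB := ((mem_PMZS_iff he hord hsum B).1 hB).1
      have hsuppC := ((mem_PMZS_iff he hord hsum C).1 hC).1
      have hrB := repM_eq hne hinje hsuppB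
      have hrC := repM_eq hne hinje hsuppC
      set aB := count (E0 e m) B
      set bB : Fin r → ℕ := fun i => count (e i) B
      set aC := count (E0 e m) C
      set bC : Fin r → ℕ := fun i => count (e i) C
      have hcB : Cond m aB bB := by rw [hrB] at hB; exact (repM_mem_iff he hord hsum _ _).1 hB
      have hcC : Cond m aC bC := by rw [hrC] at hC; exact (repM_mem_iff he hord hsum _ _).1 hC
      have hsum2 : repM e m 2 (fun _ => 0) = repM e m (aB + aC) (fun i => bB i + bC i) := by
        rw [← repM_add, ← hrB, ← hrC]; exact hBC
      have hcnta : 2 = aB + aC := by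
        have := congrArg (count (E0 e m)) hsum2
        rwa [count_repM_e0 hne, count_repM_e0 hne] at this
      have hcntb : ∀ i, 0 = bB i + bC i := by
        intro i
        have := congrArg (count (e i)) hsum2
        rwa [count_repM_e hne hinje, count_repM_e hne hinje] at this
      have hio : ∀ (x : ℕ) (bx : Fin r → ℕ), Cond m x bx → (∀ i, bx i = 0) → x % 2 = 0 := by
        rintro x bx (⟨h1, -⟩ | ⟨h1, h2⟩) hb
        · exact h1
        · exfalso
          have h3 := (h2 ⟨0, hr⟩).1
          have h4 := hm ⟨0, hr⟩
          have h5 := hb ⟨0, hr⟩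
          omega
      have hbB0 : ∀ i, bB i = 0 := fun i => by have := (hcntb i); omega
      have hbC0 : ∀ i, bC i = 0 := fun i => by have := (hcntb i); omega
      have haB := hio aB bB hcB hbB0
      have haC := hio aC bC hcC hbC0
      rcases Nat.eq_zero_or_pos aB with h0 | h0
      · exact Or.inl (by rw [hrB]; exact hzero _ _ h0 hbB0)
      · have : aC = 0 := by omega
        exact Or.inr (by rw [hrC]; exact hzero _ _ this hbC0)
    · refine ⟨UA_mem he hord hsum j, ?_, ?_⟩
      · intro h
        have h2 := ((repM_eq_zero_iff hne hinje).1 h).2 j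
        simp at h2
      intro B C hB hC hBC
      have hsuppB := ((mem_PMZS_iff he hord hsum B).1 hB).1
      have hsuppC := ((mem_PMZS_iff he hord hsum C).1 hC).1
      have hrB := repM_eq hne hinje hsuppB
      have hrC := repM_eq hne hinje hsuppC
      set aB := count (E0 e m) B
      set bB : Fin r → ℕ := fun i => count (e i) B
      set aC := count (E0 e m) C
      set bC : Fin r → ℕ := fun i => count (e i) C
      have hcB : Cond m aB bB := by rw [hrB] at hB; exact (repM_mem_iff he hord hsum _ _).1 hB
      have hcC : Cond m aC bC := by rw [hrC] at hC; exact (repM_mem_iff he hord hsum _ _).1 hC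
      have hsum2 : repM e m 0 (fun i => if i = j then 2 else 0)
          = repM e m (aB + aC) (fun i => bB i + bC i) := by
        rw [← repM_add, ← hrB, ← hrC]; exact hBC
      have hcnta : 0 = aB + aC := by
        have := congrArg (count (E0 e m)) hsum2
        rwa [count_repM_e0 hne, count_repM_e0 hne] at this
      have hcntb : ∀ i, (if i = j then 2 else 0) = bB i + bC i := by
        intro i
        have := congrArg (count (e i)) hsum2
        rwa [count_repM_e hne hinje, count_repM_e hne hinje] at this
      have haB : aB = 0 := by omega
      have haC : aC = 0 := by omega
      have hbBe : ∀ i, bB i % 2 = 0 := by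
        rcases hcB with ⟨-, h⟩ | ⟨h1, -⟩
        · exact h
        · omega
      rcases Nat.eq_zero_or_pos (bB j) with h0 | h0
      · left
        rw [hrB]
        refine hzero _ _ haB (fun i => ?_)
        have h3 := hcntb i
        by_cases h : i = j
        · rw [if_pos h] at h3; rw [h]; omega
        · rw [if_neg h] at h3; omega
      · right
        rw [hrC]
        refine hzero _ _ haC (fun i => ?_)
        have h3 := hcntb i
        by_cases h : i = j
        · rw [if_pos h, h] at h3
          have h4 := hbBe j
          rw [h]
          omega
        · rw [if_neg h] at h3; omega
    · refine ⟨WA_mem he hord hsum, ?_, ?_⟩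
      · intro h
        have := ((repM_eq_zero_iff hne hinje).1 h).1
        omega
      intro B C hB hC hBC
      have hsuppB := ((mem_PMZS_iff he hord hsum B).1 hB).1
      have hsuppC := ((mem_PMZS_iff he hord hsum C).1 hC).1
      have hrB := repM_eq hne hinje hsuppB
      have hrC := repM_eq hne hinje hsuppC
      set aB := count (E0 e m) B
      set bB : Fin r → ℕ := fun i => count (e i) B
      set aC := count (E0 e m) C
      set bC : Fin r → ℕ := fun i => count (e i) C
      have hcB : Cond m aB bB := by rw [hrB] at hB; exact (repM_mem_iff he hord hsum _ _).1 hB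
      have hcC : Cond m aC bC := by rw [hrC] at hC; exact (repM_mem_iff he hord hsum _ _).1 hC
      have hsum2 : repM e m 1 m = repM e m (aB + aC) (fun i => bB i + bC i) := by
        rw [← repM_add, ← hrB, ← hrC]; exact hBC
      have hcnta : 1 = aB + aC := by
        have := congrArg (count (E0 e m)) hsum2
        rwa [count_repM_e0 hne, count_repM_e0 hne] at this
      have hcntb : ∀ i, m i = bB i + bC i := by
        intro i
        have := congrArg (count (e i)) hsum2
        rwa [count_repM_e hne hinje, count_repM_e hne hinje] at this
      rcases Nat.eq_zero_or_pos aB with h0 | h0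
      · left
        rw [hrB]
        refine hzero _ _ h0 (fun i => ?_)
        have hc1 : aC = 1 := by omega
        have h4 : m i ≤ bC i := by
          rcases hcC with ⟨h1, -⟩ | ⟨-, h2⟩
          · omega
          · exact (h2 i).1
        have := hcntb i
        omega
      · right
        rw [hrC]
        have hc0 : aC = 0 := by omega
        refine hzero _ _ hc0 (fun i => ?_)
        have h4 : m i ≤ bB i := by
          rcases hcB with ⟨h1, -⟩ | ⟨-, h2⟩
          · omega
          · exact (h2 i).1
        have := hcntb i
        omega

end Atoms

end Stmt13

namespace Stmt13

section Lengths

variable {G : Type*} [AddCommGroup G] [DecidableEq G] [Finite G]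
  {r : ℕ} {e : Fin r → G} {m : Fin r → ℕ}

lemma repM_nsmul (n a : ℕ) (b : Fin r → ℕ) :
    n • repM e m a b = repM e m (n * a) (fun i => n * b i) := by
  rw [repM, repM, smul_add, ← mul_smul, Finset.smul_sum]
  congr 1
  exact Finset.sum_congr rfl fun i _ => (mul_smul n (b i) _).symm

lemma repM_sum0 {ι : Type*} (s : Finset ι) (c : ι → Fin r → ℕ) :
    ∑ i ∈ s, repM e m 0 (c i) = repM e m 0 (fun j => ∑ i ∈ s, c i j) := by
  classical
  induction s using Finset.induction with
  | empty => simp [repM]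
  | @insert x s hx ih =>
      rw [Finset.sum_insert hx, ih, repM_add]
      refine repM_congr rfl (fun j => ?_)
      rw [Finset.sum_insert hx]

variable (he : IsIndepFamily e) (hord : ∀ i, addOrderOf (e i) = 2 * m i)
  (hsum : 2 ≤ ∑ i, m i)

include he hord hsum

lemma factor_sum (l : List (Multiset G)) (hl : ∀ A ∈ l, IsPMAtom (PMZS (SG0 e m)) A) :
    ∃ (w v : ℕ) (u : Fin r → ℕ),
      l.sum = repM e m (w + 2*v) (fun i => w * m i + 2 * u i) ∧
      l.length = w + v + ∑ i, u i := by
  induction l with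
  | nil =>
      refine ⟨0, 0, fun _ => 0, ?_, by simp⟩
      rw [List.sum_nil]
      exact ((repM_eq_zero_iff (hne0 he hord hsum) (hinj he hord)).2
        ⟨by norm_num, fun i => by simp⟩).symm
  | cons A l ih =>
      obtain ⟨w, v, u, h1, h2⟩ := ih (fun B hB => hl B (List.mem_cons_of_mem A hB))
      have hA := hl A List.mem_cons_self
      rw [List.sum_cons, List.length_cons, h1, h2]
      rcases (atom_iff he hord hsum A).1 hA with rfl | ⟨j, rfl⟩ | rfl
      · -- VA
        refine ⟨w, v + 1, u, ?_, by omega⟩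
        rw [VA, repM_add]
        refine repM_congr (by omega) (fun i => ?_)
        show 0 + (w * m i + 2 * u i) = w * m i + 2 * u i
        omega
      · -- UA j
        refine ⟨w, v, (fun i => if i = j then u i + 1 else u i), ?_, ?_⟩
        · rw [UA, repM_add]
          refine repM_congr (by omega) (fun i => ?_)
          show (if i = j then 2 else 0) + (w * m i + 2 * u i)
              = w * m i + 2 * (if i = j then u i + 1 else u i)
          by_cases h : i = j
          · rw [if_pos h, if_pos h]; omega
          · rw [if_neg h, if_neg h]; omega
        · have hsu : ∑ i, (if i = j then u i + 1 else u i) = (∑ i, u i) + 1 := by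
            have h1 : ∀ i ∈ Finset.univ, (if i = j then u i + 1 else u i)
                = u i + (if i = j then 1 else 0) := by
              intro i _
              by_cases h : i = j
              · rw [if_pos h, if_pos h]
              · rw [if_neg h, if_neg h]; omega
            rw [Finset.sum_congr rfl h1, Finset.sum_add_distrib, Finset.sum_ite_eq',
              if_pos (Finset.mem_univ j)]
          show w + v + (∑ i, u i) + 1 = w + v + ∑ i, (if i = j then u i + 1 else u i)
          omega
      · -- WA
        refine ⟨w + 1, v, u, ?_, by omega⟩
        rw [WA, repM_add]
        refine repM_congr (by omega) (fun i => ?_)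
        show m i + (w * m i + 2 * u i) = (w + 1) * m i + 2 * u i
        ring

lemma length_set_eq (a : ℕ) (b : Fin r → ℕ) (hcond : Cond m a b) :
    LengthSet (PMZS (SG0 e m)) (repM e m a b) =
      {k | ∃ w, w ≤ a ∧ w % 2 = a % 2 ∧ (∀ i, w * m i ≤ b i) ∧
        2*k + w * (∑ i, m i) = a + (∑ i, b i) + w} := by
  have hne := hne0 he hord hsum
  have hinje := hinj he hord
  ext k
  simp only [Set.mem_setOf_eq, LengthSet]
  constructor
  · rintro ⟨l, hl, hls, hlk⟩
    obtain ⟨w, v, u, h1, h2⟩ := factor_sum he hord hsum l hl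
    rw [hls] at h1
    have ha : a = w + 2*v := by
      have := congrArg (count (E0 e m)) h1
      rwa [count_repM_e0 hne, count_repM_e0 hne] at this
    have hb : ∀ i, b i = w * m i + 2 * u i := by
      intro i
      have := congrArg (count (e i)) h1
      rwa [count_repM_e hne hinje, count_repM_e hne hinje] at this
    have hB : ∑ i, b i = w * (∑ i, m i) + 2 * (∑ i, u i) := by
      rw [Finset.sum_congr rfl (fun i (_ : i ∈ Finset.univ) => hb i),
        Finset.sum_add_distrib, ← Finset.mul_sum, ← Finset.mul_sum]
    refine ⟨w, by omega, by omega, fun i => by rw [hb i]; omega, by omega⟩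
  · rintro ⟨w, hwa, hwp, hwb, heq⟩
    -- define v and u
    have hv : ∃ v, a = w + 2 * v := ⟨(a - w)/2, by omega⟩
    obtain ⟨v, hv⟩ := hv
    have hu : ∀ i, ∃ ui, b i = w * m i + 2 * ui := by
      intro i
      have hwbi := hwb i
      obtain ⟨t, ht⟩ : ∃ t, w = 2*t + w % 2 := ⟨w/2, by omega⟩
      rcases hcond with ⟨h1, h2⟩ | ⟨h1, h2⟩
      · have h0 : w % 2 = 0 := by omega
        have hexp : w * m i = 2*(t * m i) := by rw [ht, h0]; ring
        have hb2 := h2 i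
        exact ⟨(b i - w * m i)/2, by omega⟩
      · have h0 : w % 2 = 1 := by omega
        have hexp : w * m i = 2*(t * m i) + m i := by rw [ht, h0]; ring
        obtain ⟨h2a, h2b⟩ := h2 i
        exact ⟨(b i - w * m i)/2, by omega⟩
    choose u hu using hu
    set l : List (Multiset G) := List.replicate w (WA e m) ++ List.replicate v (VA e m) ++
      (List.finRange r).flatMap (fun i => List.replicate (u i) (UA e m i)) with hldef
    have hatoms : ∀ A ∈ l, IsPMAtom (PMZS (SG0 e m)) A := by
      intro A hA
      rw [hldef, List.mem_append, List.mem_append] at hA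
      rcases hA with (hA | hA) | hA
      · rw [List.eq_of_mem_replicate hA]
        exact (atom_iff he hord hsum _).2 (Or.inr (Or.inr rfl))
      · rw [List.eq_of_mem_replicate hA]
        exact (atom_iff he hord hsum _).2 (Or.inl rfl)
      · rw [List.mem_flatMap] at hA
        obtain ⟨i, -, hA⟩ := hA
        rw [List.eq_of_mem_replicate hA]
        exact (atom_iff he hord hsum _).2 (Or.inr (Or.inl ⟨i, rfl⟩))
    have hsum_flat : ((List.finRange r).flatMap
        (fun i => List.replicate (u i) (UA e m i))).sum = ∑ i, u i • UA e m i := by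
      rw [List.flatMap, List.sum_flatten, List.map_map]
      rw [Fin.sum_univ_def]
      congr 1
      apply List.map_congr_left
      intro i _
      show (List.replicate (u i) (UA e m i)).sum = u i • UA e m i
      rw [List.sum_replicate]
    have hUAsum : ∑ i, u i • UA e m i = repM e m 0 (fun j => 2 * u j) := by
      have h1 : ∀ i ∈ Finset.univ, u i • UA e m i
          = repM e m 0 (fun j => u i * (if j = i then 2 else 0)) := by
        intro i _
        rw [UA, repM_nsmul]
        exact repM_congr (by omega) (fun j => rfl)
      rw [Finset.sum_congr rfl h1, repM_sum0]
      refine repM_congr rfl (fun j => ?_)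
      have h2 : ∀ i ∈ Finset.univ, u i * (if j = i then 2 else 0)
          = if i = j then 2 * u j else 0 := by
        intro i _
        by_cases h : i = j
        · rw [if_pos h.symm, if_pos h, h]
          ring
        · rw [if_neg (fun hh => h hh.symm), if_neg h, mul_zero]
      rw [Finset.sum_congr rfl h2, Finset.sum_ite_eq', if_pos (Finset.mem_univ j)]
    have hlsum : l.sum = repM e m a b := by
      rw [hldef, List.sum_append, List.sum_append, List.sum_replicate, List.sum_replicate,
        hsum_flat, hUAsum, WA, VA, repM_nsmul, repM_nsmul, repM_add, repM_add]
      refine repM_congr (by omega) (fun i => ?_)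
      show w * m i + v * 0 + 2 * u i = b i
      rw [hu i]
      omega
    have hllen : l.length = w + v + ∑ i, u i := by
      rw [hldef, List.length_append, List.length_append, List.length_replicate,
        List.length_replicate, List.length_flatMap]
      congr 1
      rw [Fin.sum_univ_def]
      congr 1
      apply List.map_congr_left
      intro i _
      show (List.replicate (u i) (UA e m i)).length = u i
      rw [List.length_replicate]
    refine ⟨l, hatoms, hlsum, ?_⟩
    rw [hllen]
    -- 2k + wM = a + B + w, B = wM + 2Σu, a = w + 2v  ⇒  k = w + v + Σu
    have hB : ∑ i, b i = w * (∑ i, m i) + 2 * (∑ i, u i) := by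
      rw [Finset.sum_congr rfl (fun i (_ : i ∈ Finset.univ) => hu i),
        Finset.sum_add_distrib, ← Finset.mul_sum, ← Finset.mul_sum]
    omega

end Lengths

end Stmt13


/-- Let `G` be a finite abelian group, `e₁, …, e_r` independent elements of even orders
`2m_i` with `m₁ + … + m_r ≥ 2`, and `e₀ = m₁e₁ + … + m_re_r`. Then
`Δ(B±({e₀, e₁, …, e_r})) = {m₁ + … + m_r - 1}`. -/
theorem stmt_13 (G : Type*) [AddCommGroup G] [Finite G] (r : ℕ) (e : Fin r → G)
    (m : Fin r → ℕ) (he : IsIndepFamily e)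
    (hord : ∀ i, addOrderOf (e i) = 2 * m i) (hsum : 2 ≤ ∑ i, m i) :
    DeltaM (PMZS (insert (∑ i, m i • e i) (Set.range e))) = {(∑ i, m i) - 1} := by
  classical
  show DeltaM (PMZS (Stmt13.SG0 e m)) = {(∑ i, m i) - 1}
  have hne := Stmt13.hne0 he hord hsum
  have hinje := Stmt13.hinj he hord
  set M := ∑ i, m i with hM
  have hM2 : 2 ≤ M := hsum
  ext d
  simp only [Set.mem_singleton_iff]
  constructor
  · rintro ⟨S, hS, hdpos, ℓ, hℓ, hℓd, hmin⟩
    have hsupp := ((Stmt13.mem_PMZS_iff he hord hsum S).1 hS).1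
    have hrep := Stmt13.repM_eq hne hinje hsupp
    set a := Multiset.count (Stmt13.E0 e m) S with hadef
    set b : Fin r → ℕ := fun i => Multiset.count (e i) S with hbdef
    have hcond : Stmt13.Cond m a b := by
      rw [hrep] at hS
      exact (Stmt13.repM_mem_iff he hord hsum a b).1 hS
    have hLS : LengthSet (PMZS (Stmt13.SG0 e m)) S =
        {k | ∃ w, w ≤ a ∧ w % 2 = a % 2 ∧ (∀ i, w * m i ≤ b i) ∧
          2*k + w * M = a + (∑ i, b i) + w} := by
      rw [hrep]
      exact Stmt13.length_set_eq he hord hsum a b hcond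
    rw [hLS] at hℓ hℓd hmin
    set B := ∑ i, b i with hB
    obtain ⟨w, hw1, hw2, hw3, hw4⟩ := hℓ
    obtain ⟨w', hw'1, hw'2, hw'3, hw'4⟩ := hℓd
    -- step 1 : w' < w
    have hww : w' < w := by
      by_contra hcon
      push_neg at hcon
      have h1 : w * M ≤ w' * M := Nat.mul_le_mul_right M hcon
      have h2 : (w' - w) * M = w' * M - w * M := Nat.sub_mul w' w M
      have h3 : (w' - w) * 2 ≤ (w' - w) * M := Nat.mul_le_mul_left (w' - w) hM2
      omega
    -- step 2 : w ≥ w' + 2 and  2d = (w - w')(M-1), so d ≥ M - 1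
    have hs2 : w' + 2 ≤ w := by omega
    have h1 : w' * M ≤ w * M := Nat.mul_le_mul_right M (by omega)
    have h2 : (w - w') * M = w * M - w' * M := Nat.sub_mul w w' M
    have h3 : (w - w') * (M - 1) = (w - w') * M - (w - w') := by
      rw [Nat.mul_sub, Nat.mul_one]
    have h4 : 2 * (M - 1) ≤ (w - w') * (M - 1) := Nat.mul_le_mul_right (M - 1) (by omega)
    have hdge : M - 1 ≤ d := by omega
    -- step 3 : ℓ + (M - 1) is a length, so d ≤ M - 1 by minimality
    have hmem : ℓ + (M - 1) ∈ {k | ∃ w, w ≤ a ∧ w % 2 = a % 2 ∧ (∀ i, w * m i ≤ b i) ∧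
        2*k + w * M = a + B + w} := by
      refine ⟨w - 2, by omega, by omega, fun i => ?_, ?_⟩
      · exact le_trans (Nat.mul_le_mul_right (m i) (by omega)) (hw3 i)
      · have h5 : (w - 2) * M = w * M - 2 * M := Nat.sub_mul w 2 M
        have h6 : 2 * M ≤ w * M := Nat.mul_le_mul_right M (by omega)
        omega
    have := hmin _ hmem (by omega)
    omega
  · rintro rfl
    refine ⟨Stmt13.repM e m 2 (fun i => 2 * m i), ?_, ?_⟩
    · exact (Stmt13.repM_mem_iff he hord hsum _ _).2 (Or.inl ⟨rfl, fun i => by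
        show (2 * m i) % 2 = 0
        omega⟩)
    · have hcond : Stmt13.Cond m 2 (fun i => 2 * m i) := Or.inl ⟨rfl, fun i => by
        show (2 * m i) % 2 = 0
        omega⟩
      rw [Stmt13.length_set_eq he hord hsum _ _ hcond]
      have hB : ∑ i, 2 * m i = 2 * M := by rw [hM, Finset.mul_sum]
      refine ⟨by omega, 2, ⟨2, le_rfl, rfl, fun i => le_rfl, by omega⟩, ?_, ?_⟩
      · exact ⟨0, by omega, by omega, fun i => by omega, by omega⟩
      · rintro k ⟨w, hw1, hw2, hw3, hw4⟩ hk2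
        have hw02 : w = 0 ∨ w = 2 := by omega
        rcases hw02 with rfl | rfl
        · simp only [zero_mul] at hw4
          omega
        · omega
end

section
/- Let G be an abelian group. (1) If G is not a torsion group (i.e. G contains an element of infinite order), then Δ*(B±(G)) = ℕ. (2) If G is a torsion group, then Δ*(B±(G)) = ⋃_{G'} Δ*(B±(G')), where the union is over all finite subgroups G' of G. -/
open Multiset

variable {G : Type*} [AddCommGroup G]

/-- membership predicate for `(n•g)^a g^b ∈ B±({n•g,g})` in numeric form -/
def PMem (n a b : ℕ) : Prop := ∃ p q : ℕ, p ≤ a ∧ q ≤ b ∧ 2*(p*n+q) = a*n+b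

lemma pmem_add {n a b c d : ℕ} (h1 : PMem n a b) (h2 : PMem n c d) : PMem n (a+c) (b+d) := by
  obtain ⟨p, q, hp, hq, he⟩ := h1
  obtain ⟨p', q', hp', hq', he'⟩ := h2
  refine ⟨p+p', q+q', by omega, by omega, ?_⟩
  zify at he he' ⊢
  linear_combination he + he'

lemma pmem_20 {n : ℕ} : PMem n 2 0 := ⟨1, 0, by omega, by omega, by ring⟩
lemma pmem_02 {n : ℕ} : PMem n 0 2 := ⟨0, 1, by omega, by omega, by ring⟩
lemma pmem_1n {n : ℕ} : PMem n 1 n := ⟨0, n, by omega, by omega, by ring⟩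

lemma pmem_wlog {n a b : ℕ} (h : PMem n a b) :
    ∃ p q : ℕ, p ≤ a ∧ q ≤ b ∧ 2*(p*n+q) = a*n+b ∧ 2*p ≤ a := by
  obtain ⟨p, q, hp, hq, he⟩ := h
  rcases le_or_gt (2*p) a with h' | h'
  · exact ⟨p, q, hp, hq, he, h'⟩
  · refine ⟨a - p, b - q, by omega, by omega, ?_, by omega⟩
    zify [hp, hq] at *
    linear_combination -he

lemma not_pmem_1j {n j : ℕ} (hj : j < n) : ¬ PMem n 1 j := by
  rintro ⟨p, q, hp, hq, he⟩
  interval_cases p <;> simp only [zero_mul, one_mul] at he <;> omega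

lemma not_pmem_01 {n : ℕ} : ¬ PMem n 0 1 := by
  rintro ⟨p, q, hp, hq, he⟩
  interval_cases p
  simp only [zero_mul] at he
  omega

lemma pmem_decomp {n a b : ℕ} (hn : 2 ≤ n) (h : PMem n a b)
    (h1 : ¬(a = 2 ∧ b = 0)) (h2 : ¬(a = 0 ∧ b = 2)) (h3 : ¬(a = 1 ∧ b = n))
    (h0 : a + b ≠ 0) :
    ∃ a₁ b₁ a₂ b₂, PMem n a₁ b₁ ∧ PMem n a₂ b₂ ∧ a₁ + a₂ = a ∧ b₁ + b₂ = b ∧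
      a₁ + b₁ ≠ 0 ∧ a₂ + b₂ ≠ 0 := by
  obtain ⟨p, q, hp, hq, he, hpa⟩ := pmem_wlog h
  rcases eq_or_lt_of_le hpa with hm | hm
  · -- a = 2*p, so b = 2*q
    have hA : (2*p) * n = a*n := by rw [hm]
    have hb : b = 2*q := by
      zify at hA he ⊢
      linear_combination hA - he
    rcases Nat.eq_zero_or_pos a with ha0 | hapos
    · -- a = 0, b even, b ≥ 4
      have hq2 : 2 ≤ q := by omega
      refine ⟨0, 2, 0, b - 2, pmem_02, ⟨0, q - 1, by omega, by omega, ?_⟩, by omega, by omega,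
        by omega, by omega⟩
      simp only [zero_mul, zero_add]
      omega
    · -- a = 2*p ≥ 2, p ≥ 1
      have hp1 : 1 ≤ p := by omega
      have ha2 : 2 ≤ a := by omega
      refine ⟨2, 0, a - 2, b, pmem_20, ⟨p - 1, q, by omega, hq, ?_⟩, by omega, by omega,
        by omega, by omega⟩
      zify [hp1, ha2]
      zify at he
      linear_combination he
  · -- 2*p < a : "m ≥ 1" case
    have he' : (2:ℤ)*(p*n+q) = a*n+b := by exact_mod_cast he
    have h2q : 2*(q:ℤ) = ((a:ℤ) - 2*p)*n + b := by linear_combination he'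
    have hge1 : (1:ℤ) ≤ (a:ℤ) - 2*p := by
      have : (2*p : ℤ) < a := by exact_mod_cast hm
      linarith
    have hMn : (n:ℤ) ≤ ((a:ℤ) - 2*p)*n := by
      calc (n:ℤ) = 1 * n := (one_mul _).symm
      _ ≤ ((a:ℤ) - 2*p)*n := by
          apply mul_le_mul_of_nonneg_right hge1 (by positivity)
    have hqb : (q:ℤ) ≤ b := by exact_mod_cast hq
    have hMb : ((a:ℤ) - 2*p)*n ≤ b := by linarith
    have hbn : n ≤ b := by
      have : (n:ℤ) ≤ b := le_trans hMn hMb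
      exact_mod_cast this
    have hqn : n ≤ q := by
      have : (n:ℤ) ≤ q := by linarith
      exact_mod_cast this
    have ha1 : 1 ≤ a := by omega
    refine ⟨1, n, a - 1, b - n, pmem_1n, ⟨p, q - n, by omega, by omega, ?_⟩, by omega, by omega,
      by omega, by omega⟩
    zify [hqn, ha1, hbn]
    linear_combination he'

section InfiniteOrder

open Multiset

set_option linter.unusedSectionVars false

variable {G : Type*} [AddCommGroup G] [DecidableEq G] {g : G} {n : ℕ}

lemma nsmul_inj (hg : addOrderOf g = 0) {x y : ℕ} (h : x • g = y • g) : x = y := by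
  by_contra hne
  rw [addOrderOf_eq_zero_iff'] at hg
  rcases Nat.lt_or_ge x y with hlt | hge
  · exact hg (y - x) (by omega) (by rw [sub_nsmul _ (le_of_lt hlt), h]; abel)
  · have hlt : y < x := by omega
    exact hg (x - y) (by omega) (by rw [sub_nsmul _ (le_of_lt hlt), h]; abel)

lemma g_ne_zero (hg : addOrderOf g = 0) : g ≠ 0 := by
  intro h
  have : (1:ℕ) • g = (0:ℕ) • g := by simp [h]
  exact one_ne_zero (nsmul_inj hg this)

lemma e2_ne_g (hg : addOrderOf g = 0) (hn : 2 ≤ n) : n • g ≠ g := by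
  intro h
  have h2 : n • g = (1:ℕ) • g := by simpa using h
  have := nsmul_inj hg h2
  omega

lemma e2_ne_zero (hg : addOrderOf g = 0) (hn : 2 ≤ n) : n • g ≠ 0 := by
  intro h
  have h2 : n • g = (0:ℕ) • g := by simpa using h
  have := nsmul_inj hg h2
  omega

/-- canonical decomposition of a multiset supported on `{n•g, g}` -/
lemma supp_decomp (hg : addOrderOf g = 0) (hn : 2 ≤ n) {S : Multiset G}
    (hS : ∀ x ∈ S, x ∈ ({n • g, g} : Set G)) :
    S = replicate (S.count (n • g)) (n • g) + replicate (S.count g) g := by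
  ext y
  rw [count_add, count_replicate, count_replicate]
  by_cases h2 : y = n • g
  · subst h2
    rw [if_pos rfl, if_neg (fun hh => (e2_ne_g hg hn) hh.symm), add_zero]
  · by_cases h1 : y = g
    · subst h1
      rw [if_neg (fun hh => (e2_ne_g hg hn) hh), if_pos rfl, zero_add]
    · rw [if_neg (fun hh => h2 hh.symm), if_neg (fun hh => h1 hh.symm)]
      exact count_eq_zero_of_notMem (fun hy => by rcases hS y hy with h | h <;> simp_all)

lemma sum_pair' (a b : ℕ) :
    (replicate a (n • g) + replicate b g).sum = (a * n + b) • g := by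
  rw [Multiset.sum_add, Multiset.sum_replicate, Multiset.sum_replicate, smul_smul, add_smul]

lemma pair_supp (a b : ℕ) : ∀ x ∈ replicate a (n • g) + replicate b g, x ∈ ({n • g, g} : Set G) := by
  intro x hx
  rcases Multiset.mem_add.mp hx with h | h
  · left; exact eq_of_mem_replicate h
  · right; exact eq_of_mem_replicate h

lemma count_pair_e2 (hg : addOrderOf g = 0) (hn : 2 ≤ n) (a b : ℕ) :
    (replicate a (n • g) + replicate b g).count (n • g) = a := by
  rw [count_add, count_replicate, count_replicate, if_pos rfl,
    if_neg (fun hh => (e2_ne_g hg hn) hh.symm), add_zero]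

lemma count_pair_g (hg : addOrderOf g = 0) (hn : 2 ≤ n) (a b : ℕ) :
    (replicate a (n • g) + replicate b g).count g = b := by
  rw [count_add, count_replicate, count_replicate, if_pos rfl,
    if_neg (fun hh => (e2_ne_g hg hn) hh), zero_add]

/-- membership characterization -/
lemma mem_pmzs_pair (hg : addOrderOf g = 0) (hn : 2 ≤ n) {a b : ℕ} :
    (replicate a (n • g) + replicate b g) ∈ PMZS ({n • g, g} : Set G) ↔ PMem n a b := by
  constructor
  · rintro ⟨-, S₁, S₂, hsplit, hsum⟩
    set p := S₁.count (n • g) with hpdef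
    set q := S₁.count g with hqdef
    set p₂ := S₂.count (n • g) with hp2def
    set q₂ := S₂.count g with hq2def
    have hS₁ : S₁ = replicate p (n • g) + replicate q g := by
      apply supp_decomp hg hn
      intro x hx
      exact pair_supp a b x (by rw [hsplit]; exact Multiset.mem_add.mpr (Or.inl hx))
    have hS₂ : S₂ = replicate p₂ (n • g) + replicate q₂ g := by
      apply supp_decomp hg hn
      intro x hx
      exact pair_supp a b x (by rw [hsplit]; exact Multiset.mem_add.mpr (Or.inr hx))
    have hpa : p + p₂ = a := by
      have := congrArg (fun s => Multiset.count (n • g) s) hsplit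
      simpa [count_pair_e2 hg hn, count_add] using this.symm
    have hqb : q + q₂ = b := by
      have := congrArg (fun s => Multiset.count g s) hsplit
      simpa [count_pair_g hg hn, count_add] using this.symm
    have hsum1 : S₁.sum = (p * n + q) • g := by rw [hS₁, sum_pair']
    have hsum2 : S₂.sum = (p₂ * n + q₂) • g := by rw [hS₂, sum_pair']
    have heq : p * n + q = p₂ * n + q₂ := nsmul_inj hg (by rw [← hsum1, ← hsum2, hsum])
    refine ⟨p, q, by omega, by omega, ?_⟩
    have h1 : (p + p₂) * n = p * n + p₂ * n := add_mul _ _ _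
    have h2 : a * n = (p + p₂) * n := by rw [hpa]
    omega
  · rintro ⟨p, q, hp, hq, he⟩
    refine ⟨pair_supp a b, replicate p (n • g) + replicate q g,
      replicate (a - p) (n • g) + replicate (b - q) g, ?_, ?_⟩
    · rw [add_add_add_comm, ← replicate_add, ← replicate_add,
        Nat.add_sub_cancel' hp, Nat.add_sub_cancel' hq]
    · rw [sum_pair', sum_pair']
      congr 1
      have h1 : (a - p) * n = a * n - p * n := Nat.sub_mul _ _ _
      have h2 : p * n ≤ a * n := Nat.mul_le_mul_right _ hp
      omega

lemma nonzero_pair {a b : ℕ} (h : a + b ≠ 0) :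
    replicate a (n • g) + replicate b g ≠ (0 : Multiset G) := by
  intro h0
  have := congrArg Multiset.card h0
  simp only [Multiset.card_add, Multiset.card_replicate, Multiset.card_zero] at this
  omega

lemma counts_of_split (hg : addOrderOf g = 0) (hn : 2 ≤ n) {B : Multiset G}
    (hB : B ∈ PMZS ({n • g, g} : Set G)) :
    B = replicate (B.count (n • g)) (n • g) + replicate (B.count g) g ∧
      PMem n (B.count (n • g)) (B.count g) ∧
      (B ≠ 0 → B.count (n • g) + B.count g ≠ 0) := by
  have hd := supp_decomp hg hn hB.1
  refine ⟨hd, (mem_pmzs_pair hg hn).mp (hd ▸ hB), fun hne h0 => hne ?_⟩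
  rw [hd]
  have h1 : count (n • g) B = 0 := by omega
  have h2 : count g B = 0 := by omega
  simp [h1, h2]

lemma atom_cases (hg : addOrderOf g = 0) (hn : 2 ≤ n) {A : Multiset G}
    (hA : IsPMAtom (PMZS ({n • g, g} : Set G)) A) :
    A = replicate 2 (n • g) + replicate 0 g ∨ A = replicate 0 (n • g) + replicate 2 g ∨
      A = replicate 1 (n • g) + replicate n g := by
  obtain ⟨hmem, hne, hatom⟩ := hA
  obtain ⟨hdecomp, hPM, hcount⟩ := counts_of_split hg hn hmem
  set α := A.count (n • g) with hα
  set β := A.count g with hβ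
  have h0 : α + β ≠ 0 := hcount hne
  by_contra hcon
  push_neg at hcon
  obtain ⟨hc1, hc2, hc3⟩ := hcon
  have h1 : ¬(α = 2 ∧ β = 0) := fun ⟨ha, hb⟩ => hc1 (by rw [hdecomp, ha, hb])
  have h2 : ¬(α = 0 ∧ β = 2) := fun ⟨ha, hb⟩ => hc2 (by rw [hdecomp, ha, hb])
  have h3 : ¬(α = 1 ∧ β = n) := fun ⟨ha, hb⟩ => hc3 (by rw [hdecomp, ha, hb])
  obtain ⟨a₁, b₁, a₂, b₂, hP1, hP2, hsa, hsb, hne1, hne2⟩ := pmem_decomp hn hPM h1 h2 h3 h0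
  have hsum : A = (replicate a₁ (n • g) + replicate b₁ g) +
      (replicate a₂ (n • g) + replicate b₂ g) := by
    rw [hdecomp, add_add_add_comm, ← replicate_add, ← replicate_add, hsa, hsb]
  rcases hatom _ _ ((mem_pmzs_pair hg hn).mpr hP1) ((mem_pmzs_pair hg hn).mpr hP2) hsum with h | h
  · exact nonzero_pair hne1 h
  · exact nonzero_pair hne2 h

lemma isAtom_A1 (hg : addOrderOf g = 0) (hn : 2 ≤ n) :
    IsPMAtom (PMZS ({n • g, g} : Set G)) (replicate 0 (n • g) + replicate 2 g) := by
  refine ⟨(mem_pmzs_pair hg hn).mpr pmem_02, nonzero_pair (by omega), ?_⟩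
  intro B C hB hC hsum
  obtain ⟨hdB, hPB, hneB⟩ := counts_of_split hg hn hB
  obtain ⟨hdC, hPC, hneC⟩ := counts_of_split hg hn hC
  by_contra hcon
  push_neg at hcon
  have hae : B.count (n • g) + C.count (n • g) = 0 := by
    have h := congrArg (count (n • g)) hsum
    rw [count_pair_e2 hg hn, count_add] at h
    omega
  have hbe : B.count g + C.count g = 2 := by
    have h := congrArg (count g) hsum
    rw [count_pair_g hg hn, count_add] at h
    omega
  have h1 := hneB hcon.1
  have h2 := hneC hcon.2
  have h3 : B.count (n • g) = 0 := by omega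
  have h4 : B.count g = 1 := by omega
  rw [h3, h4] at hPB
  exact not_pmem_01 hPB

lemma isAtom_A2 (hg : addOrderOf g = 0) (hn : 2 ≤ n) :
    IsPMAtom (PMZS ({n • g, g} : Set G)) (replicate 2 (n • g) + replicate 0 g) := by
  refine ⟨(mem_pmzs_pair hg hn).mpr pmem_20, nonzero_pair (by omega), ?_⟩
  intro B C hB hC hsum
  obtain ⟨hdB, hPB, hneB⟩ := counts_of_split hg hn hB
  obtain ⟨hdC, hPC, hneC⟩ := counts_of_split hg hn hC
  by_contra hcon
  push_neg at hcon
  have hae : B.count (n • g) + C.count (n • g) = 2 := by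
    have h := congrArg (count (n • g)) hsum
    rw [count_pair_e2 hg hn, count_add] at h
    omega
  have hbe : B.count g + C.count g = 0 := by
    have h := congrArg (count g) hsum
    rw [count_pair_g hg hn, count_add] at h
    omega
  have h1 := hneB hcon.1
  have h2 := hneC hcon.2
  have h3 : B.count (n • g) = 1 := by omega
  have h4 : B.count g = 0 := by omega
  rw [h3, h4] at hPB
  exact not_pmem_1j (by omega) hPB

lemma isAtom_A3 (hg : addOrderOf g = 0) (hn : 2 ≤ n) :
    IsPMAtom (PMZS ({n • g, g} : Set G)) (replicate 1 (n • g) + replicate n g) := by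
  refine ⟨(mem_pmzs_pair hg hn).mpr pmem_1n, nonzero_pair (by omega), ?_⟩
  intro B C hB hC hsum
  obtain ⟨hdB, hPB, hneB⟩ := counts_of_split hg hn hB
  obtain ⟨hdC, hPC, hneC⟩ := counts_of_split hg hn hC
  by_contra hcon
  push_neg at hcon
  have hae : B.count (n • g) + C.count (n • g) = 1 := by
    have h := congrArg (count (n • g)) hsum
    rw [count_pair_e2 hg hn, count_add] at h
    omega
  have hbe : B.count g + C.count g = n := by
    have h := congrArg (count g) hsum
    rw [count_pair_g hg hn, count_add] at h
    omega
  have h1 := hneB hcon.1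
  have h2 := hneC hcon.2
  rcases Nat.eq_zero_or_pos (B.count (n • g)) with hB0 | hB1
  · -- C has the n•g, B = (0, βB) with βB ≥ 1, so C = (1, n - βB) with n - βB < n
    have h3 : C.count (n • g) = 1 := by omega
    have h4 : C.count g < n := by omega
    rw [h3] at hPC
    exact not_pmem_1j h4 hPC
  · have h3 : B.count (n • g) = 1 := by omega
    have h4 : B.count g < n := by omega
    rw [h3] at hPB
    exact not_pmem_1j h4 hPB

lemma atom_card_count (hg : addOrderOf g = 0) (hn : 2 ≤ n) {A : Multiset G}
    (hA : IsPMAtom (PMZS ({n • g, g} : Set G)) A) :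
    ∃ t s : ℕ, Multiset.card A = 2 + (n - 1) * t ∧ A.count (n • g) = t + 2 * s := by
  rcases atom_cases hg hn hA with h | h | h
  · refine ⟨0, 1, ?_, ?_⟩
    · rw [h]; simp
    · rw [h, count_pair_e2 hg hn]
  · refine ⟨0, 0, ?_, ?_⟩
    · rw [h]; simp
    · rw [h, count_pair_e2 hg hn]
  · refine ⟨1, 0, ?_, ?_⟩
    · rw [h]
      simp only [Multiset.card_add, Multiset.card_replicate]
      omega
    · rw [h, count_pair_e2 hg hn]

lemma list_inv (hg : addOrderOf g = 0) (hn : 2 ≤ n) (l : List (Multiset G))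
    (hl : ∀ A ∈ l, IsPMAtom (PMZS ({n • g, g} : Set G)) A) :
    ∃ T s : ℕ, Multiset.card l.sum = 2 * l.length + (n - 1) * T ∧
      l.sum.count (n • g) = T + 2 * s := by
  induction l with
  | nil => exact ⟨0, 0, by simp, by simp⟩
  | cons A l ih =>
    obtain ⟨T, s, h1, h2⟩ := ih (fun B hB => hl B (List.mem_cons_of_mem _ hB))
    obtain ⟨t, s', h3, h4⟩ := atom_card_count hg hn (hl A (List.mem_cons_self))
    refine ⟨t + T, s' + s, ?_, ?_⟩
    · rw [List.sum_cons, Multiset.card_add, h1, h3, List.length_cons]; ring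
    · rw [List.sum_cons, count_add, h2, h4]; ring

lemma deltaM_lb (hg : addOrderOf g = 0) (hn : 2 ≤ n) {e : ℕ}
    (he : e ∈ DeltaM (PMZS ({n • g, g} : Set G))) : n - 1 ≤ e := by
  obtain ⟨a, -, hepos, k, hkL, hkeL, -⟩ := he
  obtain ⟨l₁, hl₁a, hl₁s, hl₁len⟩ := hkL
  obtain ⟨l₂, hl₂a, hl₂s, hl₂len⟩ := hkeL
  obtain ⟨T₁, s₁, hc₁, hm₁⟩ := list_inv hg hn l₁ hl₁a
  obtain ⟨T₂, s₂, hm₂c, hm₂⟩ := list_inv hg hn l₂ hl₂a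
  rw [hl₁s, hl₁len] at hc₁
  rw [hl₁s] at hm₁
  rw [hl₂s, hl₂len] at hm₂c
  rw [hl₂s] at hm₂
  have hcc : 2 * k + (n - 1) * T₁ = 2 * (k + e) + (n - 1) * T₂ := hc₁.symm.trans hm₂c
  have hnn : T₁ + 2 * s₁ = T₂ + 2 * s₂ := hm₁.symm.trans hm₂
  have hT : T₂ < T₁ := by
    by_contra hL
    push_neg at hL
    have hmul : (n - 1) * T₁ ≤ (n - 1) * T₂ := Nat.mul_le_mul_left _ hL
    linarith
  have hT2 : T₂ + 2 ≤ T₁ := by omega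
  have hmul : (n - 1) * (T₂ + 2) ≤ (n - 1) * T₁ := Nat.mul_le_mul_left _ hT2
  have hexp : (n - 1) * (T₂ + 2) = (n - 1) * T₂ + (n - 1) * 2 := mul_add _ _ _
  have h1n : 1 ≤ n - 1 := by omega
  linarith

lemma deltaM_mem (hg : addOrderOf g = 0) (hn : 2 ≤ n) :
    (n - 1) ∈ DeltaM (PMZS ({n • g, g} : Set G)) := by
  refine ⟨replicate 2 (n • g) + replicate (2 * n) g,
    (mem_pmzs_pair hg hn).mpr ⟨1, n, by omega, by omega, by ring⟩, by omega, 2, ?_, ?_, ?_⟩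
  · -- length 2 : two copies of the atom A3
    refine ⟨[replicate 1 (n • g) + replicate n g, replicate 1 (n • g) + replicate n g],
      ?_, ?_, rfl⟩
    · intro A hA
      have : A = replicate 1 (n • g) + replicate n g := by
        rcases List.mem_cons.mp hA with h | h
        · exact h
        · simpa using h
      rw [this]
      exact isAtom_A3 hg hn
    · simp only [List.sum_cons, List.sum_nil, add_zero]
      rw [add_add_add_comm, ← replicate_add, ← replicate_add, two_mul]
  · -- length 2 + (n-1) = n + 1
    refine ⟨(replicate 2 (n • g) + replicate 0 g) ::
      List.replicate n (replicate 0 (n • g) + replicate 2 g), ?_, ?_, ?_⟩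
    · intro A hA
      rcases List.mem_cons.mp hA with h | h
      · rw [h]; exact isAtom_A2 hg hn
      · rw [List.eq_of_mem_replicate h]; exact isAtom_A1 hg hn
    · rw [List.sum_cons, List.sum_replicate, smul_add, nsmul_replicate, nsmul_replicate,
        add_add_add_comm, ← replicate_add, ← replicate_add]
      have e1 : 2 + n * 0 = 2 := by omega
      have e2 : 0 + n * 2 = 2 * n := by omega
      rw [e1, e2]
    · simp only [List.length_cons, List.length_replicate]
      omega
  · -- minimality
    rintro b ⟨l, hla, hls, hll⟩ hlt
    obtain ⟨T, s, hc, hm⟩ := list_inv hg hn l hla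
    rw [hls, hll] at hc
    rw [hls] at hm
    have hcard : Multiset.card (replicate 2 (n • g) + replicate (2 * n) g) = 2 + 2 * n := by
      simp only [Multiset.card_add, Multiset.card_replicate]
    have hcount : (replicate 2 (n • g) + replicate (2 * n) g).count (n • g) = 2 :=
      count_pair_e2 hg hn _ _
    rw [hcard] at hc
    rw [hcount] at hm
    have hT02 : T = 0 ∨ T = 2 := by omega
    rcases hT02 with rfl | rfl
    · simp only [Nat.mul_zero, Nat.add_zero] at hc
      omega
    · have he2 : (n - 1) * 2 = 2 * n - 2 := by omega
      rw [he2] at hc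
      omega

end InfiniteOrder

lemma part1 {G : Type*} [AddCommGroup G] (hG : ∃ g : G, addOrderOf g = 0) :
    DeltaStar (PMZS (Set.univ : Set G)) = {d : ℕ | 0 < d} := by
  classical
  obtain ⟨g, hg⟩ := hG
  ext d
  simp only [Set.mem_setOf_eq]
  constructor
  · rintro ⟨S, -, hne, rfl⟩
    obtain ⟨a, -, hpos, -⟩ := Nat.sInf_mem hne
    exact hpos
  · intro hd
    have hn : 2 ≤ d + 1 := by omega
    refine ⟨PMZS ({(d+1) • g, g} : Set G), ⟨?_, ?_⟩, ⟨d + 1 - 1, deltaM_mem hg hn⟩, ?_⟩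
    · intro S hS
      exact ⟨fun x _ => Set.mem_univ x, hS.2⟩
    · rintro s hs a ha ⟨c, hc, hsplit⟩
      refine ⟨fun x hx => hs.1 x ?_, ha.2⟩
      rw [hsplit]
      exact Multiset.mem_add.mpr (Or.inl hx)
    · have h1 : sInf (DeltaM (PMZS ({(d+1) • g, g} : Set G))) ≤ d + 1 - 1 :=
        Nat.sInf_le (deltaM_mem hg hn)
      have h2 : d + 1 - 1 ≤ sInf (DeltaM (PMZS ({(d+1) • g, g} : Set G))) :=
        le_csInf ⟨d + 1 - 1, deltaM_mem hg hn⟩ (fun e he => deltaM_lb hg hn he)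
      omega

section Part2

open Multiset

variable {G : Type*} [AddCommGroup G]

lemma closure_set_finite (ht : ∀ g : G, addOrderOf g ≠ 0) {s : Set G} (hs : s.Finite) :
    ((AddSubgroup.closure s : AddSubgroup G) : Set G).Finite := by
  lift s to Finset G using hs
  have h1 : AddGroup.FG (AddSubgroup.closure (s : Set G)) := AddGroup.closure_finset_fg s
  have h2 : AddMonoid.IsTorsion (AddSubgroup.closure (s : Set G)) := by
    intro x
    rw [isOfFinAddOrder_iff_nsmul_eq_zero]
    have h3 : IsOfFinAddOrder (x : G) := by
      have := ht (x : G); rwa [ne_eq, addOrderOf_eq_zero_iff, not_not] at this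
    rw [isOfFinAddOrder_iff_nsmul_eq_zero] at h3
    obtain ⟨k, hk, hk0⟩ := h3
    exact ⟨k, hk, Subtype.ext (by push_cast [hk0]; simp [hk0])⟩
  have := AddCommGroup.finite_of_fg_torsion _ h2
  exact Set.toFinite _

lemma dvdIn_trans {H : AddSubmonoid (Multiset G)} {a b c : Multiset G}
    (h1 : DvdIn H a b) (h2 : DvdIn H b c) : DvdIn H a c := by
  obtain ⟨u, hu, rfl⟩ := h1
  obtain ⟨v, hv, rfl⟩ := h2
  exact ⟨u + v, H.add_mem hu hv, add_assoc _ _ _⟩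

/-- the divisor-closed submonoid of `H` generated by `a₀` -/
def genDC (H : AddSubmonoid (Multiset G)) (a₀ : Multiset G) : AddSubmonoid (Multiset G) where
  carrier := {x | x ∈ H ∧ ∃ k : ℕ, DvdIn H x (k • a₀)}
  zero_mem' := ⟨H.zero_mem, 0, 0, H.zero_mem, by simp⟩
  add_mem' := by
    rintro x y ⟨hx, k, c, hc, hkc⟩ ⟨hy, k', c', hc', hkc'⟩
    refine ⟨H.add_mem hx hy, k + k', c + c', H.add_mem hc hc', ?_⟩
    rw [add_smul, hkc, hkc']
    abel

lemma mem_genDC {H : AddSubmonoid (Multiset G)} {a₀ x : Multiset G} :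
    x ∈ genDC H a₀ ↔ x ∈ H ∧ ∃ k : ℕ, DvdIn H x (k • a₀) := Iff.rfl

lemma length_transfer {S S' : AddSubmonoid (Multiset G)} (hsub : S' ≤ S)
    (hdc : ∀ x ∈ S', ∀ B C : Multiset G, B ∈ S → C ∈ S → x = B + C → B ∈ S' ∧ C ∈ S') :
    ∀ x ∈ S', LengthSet S' x = LengthSet S x := by
  classical
  intro x hx
  ext k
  constructor
  · rintro ⟨l, hla, hls, hll⟩
    refine ⟨l, fun A hA => ?_, hls, hll⟩
    obtain ⟨hAS', hA0, hAatom⟩ := hla A hA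
    refine ⟨hsub hAS', hA0, fun B C hB hC hBC => ?_⟩
    obtain ⟨hBS', hCS'⟩ := hdc A hAS' B C hB hC hBC
    exact hAatom B C hBS' hCS' hBC
  · rintro ⟨l, hla, hls, hll⟩
    refine ⟨l, fun A hA => ?_, hls, hll⟩
    obtain ⟨hAS, hA0, hAatom⟩ := hla A hA
    have hxA : x = A + (l.erase A).sum := by
      rw [← hls, (List.perm_cons_erase hA).sum_eq, List.sum_cons]
    have hrest : (l.erase A).sum ∈ S :=
      AddSubmonoid.list_sum_mem _ (fun B hB => (hla B (List.mem_of_mem_erase hB)).1)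
    have hAmem : A ∈ S' := (hdc x hx A _ hAS hrest hxA).1
    exact ⟨hAmem, hA0, fun B C hB hC hBC => hAatom B C (hsub hB) (hsub hC) hBC⟩

lemma part2 (hG : ∀ g : G, addOrderOf g ≠ 0) :
    DeltaStar (PMZS (Set.univ : Set G)) =
      {d : ℕ | ∃ G' : AddSubgroup G, (G' : Set G).Finite ∧
        d ∈ DeltaStar (PMZS (G' : Set G))} := by
  ext d
  simp only [Set.mem_setOf_eq]
  constructor
  · rintro ⟨S, ⟨hSle, hSdc⟩, hne, rfl⟩
    obtain ⟨a₀, ha₀S, hdist⟩ := Nat.sInf_mem hne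
    set G' : AddSubgroup G := AddSubgroup.closure {x | x ∈ a₀} with hG'def
    have hfin : (G' : Set G).Finite := closure_set_finite hG a₀.finite_toSet
    set H : AddSubmonoid (Multiset G) := PMZS (Set.univ : Set G) with hHdef
    set S' : AddSubmonoid (Multiset G) := genDC H a₀ with hS'def
    have ha₀H : a₀ ∈ H := hSle ha₀S
    have hS'S : S' ≤ S := by
      rintro x ⟨hxH, k, hk⟩
      exact hSdc (k • a₀) (S.nsmul_mem ha₀S k) x hxH hk
    have hS'G' : S' ≤ PMZS (G' : Set G) := by
      rintro x ⟨hxH, k, c, hcH, hkc⟩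
      refine ⟨fun y hy => ?_, hxH.2⟩
      have hy' : y ∈ k • a₀ := by rw [hkc]; exact Multiset.mem_add.mpr (Or.inl hy)
      have hya : y ∈ a₀ := by
        rcases Nat.eq_zero_or_pos k with rfl | hk0
        · simp at hy'
        · exact (Multiset.mem_nsmul.mp hy').2
      exact AddSubgroup.subset_closure hya
    have hdcS' : ∀ x ∈ S', ∀ B C : Multiset G, B ∈ S → C ∈ S → x = B + C →
        B ∈ S' ∧ C ∈ S' := by
      rintro x ⟨hxH, k, hk⟩ B C hB hC hBC
      constructor
      · exact ⟨hSle hB, k, dvdIn_trans ⟨C, hSle hC, hBC⟩ hk⟩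
      · exact ⟨hSle hC, k, dvdIn_trans ⟨B, hSle hB, by rw [hBC, add_comm]⟩ hk⟩
    have ha₀S' : a₀ ∈ S' := ⟨ha₀H, 1, 0, H.zero_mem, by simp⟩
    have hLT := length_transfer hS'S hdcS'
    have hsubM : DeltaM S' ⊆ DeltaM S := by
      rintro e ⟨x, hxS', hdist'⟩
      exact ⟨x, hS'S hxS', (hLT x hxS') ▸ hdist'⟩
    have hdmem : sInf (DeltaM S) ∈ DeltaM S' :=
      ⟨a₀, ha₀S', by rw [hLT a₀ ha₀S']; exact hdist⟩
    refine ⟨G', hfin, S', ⟨hS'G', ?_⟩, ⟨_, hdmem⟩, ?_⟩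
    · rintro s hs x hx ⟨c, hc, hsplit⟩
      have hxH : x ∈ H := ⟨fun y _ => Set.mem_univ y, hx.2⟩
      obtain ⟨hsH, k, hk⟩ := hs
      exact ⟨hxH, k, dvdIn_trans ⟨c, ⟨fun y _ => Set.mem_univ y, hc.2⟩, hsplit⟩ hk⟩
    · exact le_antisymm (le_csInf ⟨_, hdmem⟩ fun e he => Nat.sInf_le (hsubM he))
        (Nat.sInf_le hdmem)
  · rintro ⟨G', hfin, S, ⟨hSle, hSdc⟩, hne, rfl⟩
    refine ⟨S, ⟨fun x hx => ⟨fun y _ => Set.mem_univ y, (hSle hx).2⟩, ?_⟩, hne, rfl⟩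
    rintro s hs x hx ⟨c, hc, hsplit⟩
    have hsupp : ∀ y ∈ s, y ∈ (G' : Set G) := (hSle hs).1
    have hxG' : x ∈ PMZS (G' : Set G) :=
      ⟨fun y hy => hsupp y (by rw [hsplit]; exact Multiset.mem_add.mpr (Or.inl hy)), hx.2⟩
    have hcG' : c ∈ PMZS (G' : Set G) :=
      ⟨fun y hy => hsupp y (by rw [hsplit]; exact Multiset.mem_add.mpr (Or.inr hy)), hc.2⟩
    exact hSdc s hs x hxG' ⟨c, hcG', hsplit⟩

end Part2

/-- (1) If `G` contains an element of infinite order, then `Δ*(B±(G)) = ℕ` (the positive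
integers). (2) If `G` is a torsion group, then `Δ*(B±(G))` is the union of `Δ*(B±(G'))`
over all finite subgroups `G'` of `G`. -/
theorem stmt_17 (G : Type*) [AddCommGroup G] :
    ((∃ g : G, addOrderOf g = 0) →
      DeltaStar (PMZS (Set.univ : Set G)) = {d : ℕ | 0 < d}) ∧
    ((∀ g : G, addOrderOf g ≠ 0) →
      DeltaStar (PMZS (Set.univ : Set G)) =
        {d : ℕ | ∃ G' : AddSubgroup G, (G' : Set G).Finite ∧
          d ∈ DeltaStar (PMZS (G' : Set G))}) := by
  exact ⟨part1, part2⟩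
end
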